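/- arXiv:0809.1691 — 12 statements merged into one kernel-verified Lean document; each statement's English description precedes it below -/
import Mathlib

section
/- The sequence (λ_A(1), λ_A(2), λ_A(3), ...) is not eventually periodic. -/
/-- The generalized Liouville sequence `(λ_A(1), λ_A(2), …)` is not eventually
periodic, for `A` a nonempty set of primes. -/
theorem stmt_0 (A : Set ℕ) (hA : A ⊆ {p | p.Prime}) (hne : A.Nonempty)
    (f : ℕ → ℤ) (hf1 : f 1 = 1) (hfmul : ∀ m n, f (m * n) = f m * f n)
    (hfA : ∀ p ∈ A, f p = -1)
    (hfA' : ∀ p, p.Prime → p ∉ A → f p = 1) :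
    ¬ ∃ M k : ℕ, 1 ≤ k ∧ ∀ n, M ≤ n → f (n + k) = f n := by
  -- values on positive integers are ±1
  have hval : ∀ n : ℕ, 1 ≤ n → f n = 1 ∨ f n = -1 := by
    intro n
    induction n using Nat.strong_induction_on with
    | _ n ih =>
      intro hn
      rcases eq_or_lt_of_le hn with h1 | h2
      · left; rw [← h1]; exact hf1
      · -- n ≥ 2
        have hp : (n.minFac).Prime := Nat.minFac_prime (by omega)
        have hdvd : n.minFac ∣ n := Nat.minFac_dvd n
        have hne0 : n ≠ 0 := by omega
        have hlt : n / n.minFac < n :=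
          Nat.div_lt_self (by omega) hp.one_lt
        have hpos : 1 ≤ n / n.minFac :=
          Nat.one_le_div_iff (hp.pos) |>.mpr (Nat.le_of_dvd (by omega) hdvd)
        have heq : n = n.minFac * (n / n.minFac) := (Nat.mul_div_cancel' hdvd).symm
        have hq := ih _ hlt hpos
        have hpval : f n.minFac = 1 ∨ f n.minFac = -1 := by
          by_cases hmem : n.minFac ∈ A
          · right; exact hfA _ hmem
          · left; exact hfA' _ hp hmem
        rw [heq, hfmul]
        rcases hpval with h | h <;> rcases hq with h' | h' <;> simp [h, h']
  have hnz : ∀ n : ℕ, 1 ≤ n → f n ≠ 0 := by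
    intro n hn
    rcases hval n hn with h | h <;> simp [h]
  rintro ⟨M, k, hk, hper⟩
  -- eventually f(n+1) = f n
  have hstep : ∀ n, M ≤ n → f (n + 1) = f n := by
    intro n hn
    have hkn : M ≤ k * n := le_trans hn (Nat.le_mul_of_pos_left n hk)
    have := hper (k * n) hkn
    rw [show k * n + k = k * (n + 1) by ring, hfmul, hfmul] at this
    exact mul_left_cancel₀ (hnz k hk) this
  -- eventually constant
  have hconst : ∀ n, M ≤ n → f n = f M := by
    intro n hn
    induction n with
    | zero =>
      have hM0 : M = 0 := by omega
      rw [hM0]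
    | succ m ih =>
      rcases eq_or_lt_of_le hn with h | h
      · rw [h]
      · have hm : M ≤ m := by omega
        rw [hstep m hm, ih hm]
  obtain ⟨p, hpA⟩ := hne
  have hp : p.Prime := hA hpA
  have hfp : f p = -1 := hfA p hpA
  have hpow : ∀ j : ℕ, f (p ^ j) = (-1) ^ j := by
    intro j
    induction j with
    | zero => simpa using hf1
    | succ i ih => rw [pow_succ, pow_succ, hfmul, ih, hfp]
  have hMle : ∀ j, M ≤ j → M ≤ p ^ j := by
    intro j hj
    calc M ≤ j := hj
    _ ≤ 2 ^ j := Nat.le_of_lt Nat.lt_two_pow_self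
    _ ≤ p ^ j := Nat.pow_le_pow_left hp.two_le j
  have h1 := hconst (p ^ M) (hMle M le_rfl)
  have h2 := hconst (p ^ (M + 1)) (hMle (M + 1) (by omega))
  rw [hpow] at h1 h2
  rw [pow_succ] at h2
  have : ((-1 : ℤ) ^ M) = -((-1 : ℤ) ^ M) := by
    nth_rewrite 1 [h1]
    rw [← h2]; ring
  have hx : ((-1 : ℤ)) ^ M ≠ 0 := pow_ne_zero M (by norm_num)
  have h0 : ((-1 : ℤ)) ^ M = 0 := by linarith
  exact hx h0
end

section
/- For every α ∈ [0,1], there exists a set A of primes such that the (possibly infinite) product ∏_{p ∈ A} (p-1)/(p+1) converges to α (interpreting the product as 0 when it diverges to 0). -/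
open Filter

noncomputable def gfac (n : ℕ) : ℝ := ((n : ℝ) - 1) / ((n : ℝ) + 1)

open scoped Classical in
noncomputable def gf (α : ℝ) : ℕ → ℝ
  | 0 => 1
  | n + 1 => if n.Prime ∧ α ≤ gf α n * gfac n then gf α n * gfac n else gf α n

lemma gfac_nonneg {n : ℕ} (hn : 1 ≤ n) : 0 ≤ gfac n := by
  have h1 : (1 : ℝ) ≤ (n : ℝ) := by exact_mod_cast hn
  exact div_nonneg (by linarith) (by positivity)

lemma gfac_le_one (n : ℕ) : gfac n ≤ 1 := by
  have : (0 : ℝ) < (n : ℝ) + 1 := by positivity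
  rw [gfac, div_le_one this]; linarith

lemma gf_nonneg (α : ℝ) : ∀ n, 0 ≤ gf α n := by
  intro n
  induction n with
  | zero => norm_num [gf]
  | succ n ih =>
    rw [gf]
    split
    · next h => exact mul_nonneg ih (gfac_nonneg (le_trans one_le_two h.1.two_le))
    · exact ih

lemma gf_succ_le (α : ℝ) (n : ℕ) : gf α (n + 1) ≤ gf α n := by
  rw [gf]
  split
  · next h =>
    calc gf α n * gfac n ≤ gf α n * 1 :=
          mul_le_mul_of_nonneg_left (gfac_le_one n) (gf_nonneg α n)
      _ = gf α n := mul_one _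
  · exact le_rfl

lemma gf_antitone (α : ℝ) : Antitone (gf α) :=
  antitone_nat_of_succ_le (gf_succ_le α)

lemma gf_ge {α : ℝ} (hα : α ≤ 1) : ∀ n, α ≤ gf α n := by
  intro n
  induction n with
  | zero => simpa [gf] using hα
  | succ n ih =>
    rw [gf]
    split
    · next h => exact h.2
    · exact ih

lemma gfac_le_exp {n : ℕ} (hn : 2 ≤ n) : gfac n ≤ Real.exp (-(1 / (n : ℝ))) := by
  have hn0 : (0 : ℝ) < (n : ℝ) := by positivity
  have h2 : (2 : ℝ) ≤ (n : ℝ) := by exact_mod_cast hn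
  have h1 : gfac n ≤ 1 - 1 / (n : ℝ) := by
    have : ((n : ℝ) - 1) / ((n : ℝ) + 1) ≤ ((n : ℝ) - 1) / (n : ℝ) :=
      div_le_div_of_nonneg_left (by linarith) hn0 (by linarith)
    rw [gfac]
    calc ((n : ℝ) - 1) / ((n : ℝ) + 1) ≤ ((n : ℝ) - 1) / (n : ℝ) := this
      _ = 1 - 1 / (n : ℝ) := by field_simp
  have h2' : -(1 / (n : ℝ)) + 1 ≤ Real.exp (-(1 / (n : ℝ))) := Real.add_one_le_exp _
  linarith

open scoped Classical in
/-- For every `α ∈ [0,1]` there is a set `A` of primes with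
`∏_{p ∈ A} (p-1)/(p+1) = α` (a divergent infinite product having value `0`):
the partial products converge to `α`. -/
theorem stmt_4 (α : ℝ) (hα : α ∈ Set.Icc (0 : ℝ) 1) :
    ∃ A : Set ℕ, A ⊆ {p | p.Prime} ∧
      Tendsto (fun n : ℕ => ∏ p ∈ Finset.range n,
          (if p ∈ A then ((p : ℝ) - 1) / ((p : ℝ) + 1) else 1))
        atTop (nhds α) := by
  obtain ⟨hα0, hα1⟩ := hα
  set A : Set ℕ := {p | p.Prime ∧ α ≤ gf α p * gfac p} with hA
  refine ⟨A, fun p hp => hp.1, ?_⟩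
  -- the partial product equals `gf α n`
  have hprod : ∀ n : ℕ, (∏ p ∈ Finset.range n,
      (if p ∈ A then ((p : ℝ) - 1) / ((p : ℝ) + 1) else 1)) = gf α n := by
    intro n
    induction n with
    | zero => simp [gf]
    | succ n ih =>
      rw [Finset.prod_range_succ, ih, gf]
      by_cases h : n ∈ A
      · rw [if_pos h, if_pos (by exact h)]
        simp [gfac]
      · rw [if_neg h, if_neg (by exact h), mul_one]
  have hbdd : BddBelow (Set.range (gf α)) := ⟨0, by rintro x ⟨n, rfl⟩; exact gf_nonneg α n⟩
  have hL : Tendsto (gf α) atTop (nhds (⨅ n, gf α n)) :=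
    tendsto_atTop_ciInf (gf_antitone α) hbdd
  set L := ⨅ n, gf α n with hLdef
  have hαL : α ≤ L := le_ciInf (gf_ge hα1)
  have hLα : L ≤ α := by
    by_contra hc
    push_neg at hc
    -- all primes ≥ N are included in A
    set N : ℕ := ⌈(L + α) / (L - α)⌉₊ + 1 with hN
    have hall : ∀ p : ℕ, N ≤ p → p.Prime → p ∈ A := by
      intro p hp hpP
      by_contra hpc
      have hcond : gf α p * gfac p < α := by
        by_contra h'
        exact hpc ⟨hpP, le_of_not_gt h'⟩
      have hfp : L ≤ gf α p := ciInf_le hbdd p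
      have h2 : (2 : ℝ) ≤ (p : ℝ) := by exact_mod_cast hpP.two_le
      have hfac : 0 ≤ gfac p := gfac_nonneg (le_trans one_le_two hpP.two_le)
      have h1 : L * gfac p < α :=
        lt_of_le_of_lt (mul_le_mul_of_nonneg_right hfp hfac) hcond
      have hp1 : (0 : ℝ) < (p : ℝ) + 1 := by linarith
      have h3 : L * ((p : ℝ) - 1) < α * ((p : ℝ) + 1) := by
        rw [gfac, ← mul_div_assoc, div_lt_iff₀ hp1] at h1
        linarith
      have h4 : (p : ℝ) * (L - α) < L + α := by nlinarith
      have h5 : (p : ℝ) < (L + α) / (L - α) := by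
        rw [lt_div_iff₀ (by linarith)]; linarith
      have h6 : (L + α) / (L - α) ≤ (⌈(L + α) / (L - α)⌉₊ : ℝ) := Nat.le_ceil _
      have h7 : (N : ℝ) ≤ (p : ℝ) := by exact_mod_cast hp
      have h8 : ((⌈(L + α) / (L - α)⌉₊ : ℕ) : ℝ) + 1 ≤ (p : ℝ) := by
        rw [hN] at h7; push_cast at h7; linarith
      linarith
    -- bound gf by exp of minus partial sums of reciprocals of included primes
    set h : ℕ → ℝ := fun i => if i.Prime ∧ N ≤ i then 1 / (i : ℝ) else 0 with hh
    have hhnn : ∀ i, 0 ≤ h i := by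
      intro i; rw [hh]; dsimp only
      split
      · positivity
      · exact le_rfl
    set S : ℕ → ℝ := fun n => ∑ i ∈ Finset.range n, h i with hS
    have hfS : ∀ n, gf α n ≤ Real.exp (-(S n)) := by
      intro n
      induction n with
      | zero => simp [gf, hS]
      | succ n ih =>
        have hSsucc : S (n + 1) = S n + h n := Finset.sum_range_succ _ _
        by_cases hc2 : n.Prime ∧ N ≤ n
        · have hmem : n ∈ A := hall n hc2.2 hc2.1
          have hgf : gf α (n + 1) = gf α n * gfac n := by
            rw [gf, if_pos (show Nat.Prime n ∧ α ≤ gf α n * gfac n from hmem)]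
          have hfe : gfac n ≤ Real.exp (-(1 / (n : ℝ))) := gfac_le_exp hc2.1.two_le
          have hfn : 0 ≤ gfac n := gfac_nonneg (le_trans one_le_two hc2.1.two_le)
          calc gf α (n + 1) = gf α n * gfac n := hgf
            _ ≤ Real.exp (-(S n)) * Real.exp (-(1 / (n : ℝ))) :=
                mul_le_mul ih hfe hfn (Real.exp_nonneg _)
            _ = Real.exp (-(S n + 1 / (n : ℝ))) := by rw [← Real.exp_add]; ring_nf
            _ = Real.exp (-(S (n + 1))) := by rw [hSsucc, hh]; simp [hc2]
        · have hn0 : h n = 0 := by rw [hh]; simp [hc2]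
          calc gf α (n + 1) ≤ gf α n := gf_succ_le α n
            _ ≤ Real.exp (-(S n)) := ih
            _ = Real.exp (-(S (n + 1))) := by rw [hSsucc, hn0, add_zero]
    -- h is not summable
    have hns : ¬ Summable h := by
      intro hsum
      have hd : Summable (fun i : ℕ => if i.Prime ∧ i < N then 1 / (i : ℝ) else 0) := by
        apply summable_of_ne_finset_zero (s := Finset.range N)
        intro b hb
        simp only [Finset.mem_range, not_lt] at hb
        simp [Nat.not_lt.mpr hb]
      have hsum2 := hsum.add hd
      apply not_summable_one_div_on_primes
      convert hsum2 using 1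
      funext i
      by_cases hpi : i.Prime
      · by_cases hNi : N ≤ i
        · simp [Set.indicator, hpi, hh, hNi, Nat.not_lt.mpr hNi]
        · simp [Set.indicator, hpi, hh, hNi, Nat.lt_of_not_le hNi]
      · simp [Set.indicator, hpi, hh]
    have hStop : Tendsto S atTop atTop :=
      (not_summable_iff_tendsto_nat_atTop_of_nonneg hhnn).mp hns
    have hexp0 : Tendsto (fun n => Real.exp (-(S n))) atTop (nhds 0) :=
      Real.tendsto_exp_atBot.comp (tendsto_neg_atTop_atBot.comp hStop)
    have h0 : Tendsto (gf α) atTop (nhds 0) :=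
      squeeze_zero (gf_nonneg α) hfS hexp0
    have : L = 0 := tendsto_nhds_unique hL h0
    linarith
  have hLeq : L = α := le_antisymm hLα hαL
  have hfin := hL.congr (fun n => (hprod n).symm)
  rw [hLeq] at hfin
  convert hfin using 4
end

section
/- For every α ∈ [0,1], there exists a sequence (n_k) of squarefree positive integers such that φ(n_k)/σ(n_k) → α as k → ∞. -/
open Filter

namespace Stmt5Aux

noncomputable section

/-- k-th prime -/
def pr (k : ℕ) : ℕ := Nat.nth Nat.Prime k

lemma pr_prime (k : ℕ) : (pr k).Prime := Nat.prime_nth_prime k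

lemma pr_strictMono : StrictMono pr := Nat.nth_strictMono Nat.infinite_setOf_prime

lemma pr_pos (k : ℕ) : 0 < pr k := (pr_prime k).pos

lemma two_le_pr (k : ℕ) : 2 ≤ pr k := (pr_prime k).two_le

/-- the ratio φ(m)/σ(m) -/
def r (m : ℕ) : ℝ := (Nat.totient m : ℝ) / (ArithmeticFunction.sigma 1 m : ℝ)

lemma r_one : r 1 = 1 := by
  simp [r, ArithmeticFunction.sigma_one_apply]

lemma sigma_pos {m : ℕ} (hm : 0 < m) : 0 < ArithmeticFunction.sigma 1 m := by
  rw [ArithmeticFunction.sigma_one_apply]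
  exact Finset.sum_pos (fun d hd => Nat.pos_of_mem_divisors hd)
    ⟨1, Nat.one_mem_divisors.2 hm.ne'⟩

lemma r_pos {m : ℕ} (hm : 0 < m) : 0 < r m :=
  div_pos (by exact_mod_cast Nat.totient_pos.2 hm) (by exact_mod_cast sigma_pos hm)

lemma sigma_prime {p : ℕ} (hp : p.Prime) : ArithmeticFunction.sigma 1 p = p + 1 := by
  have := ArithmeticFunction.sigma_one_apply_prime_pow (i := 1) hp
  simpa [Finset.sum_range_succ, add_comm] using this

lemma r_prime {p : ℕ} (hp : p.Prime) : r p = ((p : ℝ) - 1) / ((p : ℝ) + 1) := by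
  rw [r, Nat.totient_prime hp, sigma_prime hp]
  push_cast [Nat.cast_sub hp.one_le]
  norm_num

lemma r_mul {m n : ℕ} (h : Nat.Coprime m n) :
    r (m * n) = r m * r n := by
  rw [r, r, r, Nat.totient_mul h,
    (ArithmeticFunction.isMultiplicative_sigma (k := 1)).map_mul_of_coprime h]
  push_cast
  rw [mul_div_mul_comm]

/-- greedy sequence -/
def seq (α : ℝ) : ℕ → ℕ
  | 0 => 1
  | k + 1 =>
      haveI := Classical.propDecidable (α ≤ r (seq α k * pr k))
      if α ≤ r (seq α k * pr k) then seq α k * pr k else seq α k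

lemma seq_succ (α : ℝ) (k : ℕ) :
    haveI := Classical.propDecidable (α ≤ r (seq α k * pr k))
    seq α (k + 1) = if α ≤ r (seq α k * pr k) then seq α k * pr k else seq α k := rfl

lemma seq_pos (α : ℝ) : ∀ k, 0 < seq α k
  | 0 => one_pos
  | k + 1 => by
      rw [seq_succ]
      split
      · exact Nat.mul_pos (seq_pos α k) (pr_pos k)
      · exact seq_pos α k

lemma seq_dvd (α : ℝ) : ∀ k, seq α k ∣ ∏ i ∈ Finset.range k, pr i
  | 0 => by simp [seq]
  | k + 1 => by
      rw [seq_succ, Finset.prod_range_succ]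
      split
      · exact mul_dvd_mul (seq_dvd α k) dvd_rfl
      · exact (seq_dvd α k).trans (dvd_mul_right _ _)

lemma pr_coprime_seq (α : ℝ) (k : ℕ) : Nat.Coprime (pr k) (seq α k) := by
  have h : Nat.Coprime (pr k) (∏ i ∈ Finset.range k, pr i) := by
    apply Nat.Coprime.prod_right
    intro i hi
    rw [Nat.coprime_primes (pr_prime k) (pr_prime i)]
    have := Finset.mem_range.mp hi; exact fun h => absurd (pr_strictMono.injective h) (by omega)
  exact h.coprime_dvd_right (seq_dvd α k)

lemma seq_squarefree (α : ℝ) : ∀ k, Squarefree (seq α k)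
  | 0 => squarefree_one
  | k + 1 => by
      rw [seq_succ]
      split
      · exact (Nat.squarefree_mul ((pr_coprime_seq α k).symm)).mpr
          ⟨seq_squarefree α k, (pr_prime k).squarefree⟩
      · exact seq_squarefree α k

def fp (k : ℕ) : ℝ := r (pr k)

lemma fp_eq (k : ℕ) : fp k = 1 - 2 / ((pr k : ℝ) + 1) := by
  rw [fp, r_prime (pr_prime k)]
  have h : (pr k : ℝ) + 1 ≠ 0 := by positivity
  field_simp
  ring

lemma fp_pos (k : ℕ) : 0 < fp k := r_pos (pr_pos k)

lemma fp_le_one (k : ℕ) : fp k ≤ 1 := by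
  rw [fp_eq]
  have : 0 ≤ 2 / ((pr k : ℝ) + 1) := by positivity
  linarith

lemma tendsto_pr : Tendsto (fun k => (pr k : ℝ)) atTop atTop :=
  tendsto_natCast_atTop_atTop.comp pr_strictMono.tendsto_atTop

lemma tendsto_fp : Tendsto fp atTop (nhds 1) := by
  have h : Tendsto (fun k => 2 / ((pr k : ℝ) + 1)) atTop (nhds 0) :=
    Tendsto.div_atTop tendsto_const_nhds
      (tendsto_atTop_add_const_right _ 1 tendsto_pr)
  have h2 : Tendsto (fun k => 1 - 2 / ((pr k : ℝ) + 1)) atTop (nhds 1) := by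
    simpa using (tendsto_const_nhds (α := ℕ) (x := (1:ℝ))).sub h
  exact Tendsto.congr (fun k => (fp_eq k).symm) h2

lemma not_summable_pr : ¬ Summable (fun k => 1 / (pr k : ℝ)) := by
  intro h
  apply Nat.Primes.not_summable_one_div
  have hbij : Function.Bijective (fun k => (⟨pr k, pr_prime k⟩ : Nat.Primes)) :=
    ⟨fun a b hab => Nat.nth_injective Nat.infinite_setOf_prime
        (congrArg Subtype.val hab),
     fun p => by
        have hm : (p : ℕ) ∈ Set.range (Nat.nth Nat.Prime) := by
          rw [Nat.range_nth_of_infinite Nat.infinite_setOf_prime]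
          exact p.2
        obtain ⟨k, hk⟩ := hm
        exact ⟨k, Subtype.ext hk⟩⟩
  refine (Equiv.ofBijective _ hbij).summable_iff.mp ?_
  exact h

lemma tendsto_sum :
    Tendsto (fun k => ∑ i ∈ Finset.range k, 2 / ((pr i : ℝ) + 1)) atTop atTop := by
  have hn : ∀ i, 0 ≤ 2 / ((pr i : ℝ) + 1) := fun i => by positivity
  rw [← not_summable_iff_tendsto_nat_atTop_of_nonneg hn]
  intro h
  apply not_summable_pr
  apply h.of_nonneg_of_le (fun i => by positivity)
  intro i
  have hp : (2 : ℝ) ≤ (pr i : ℝ) := by exact_mod_cast two_le_pr i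
  rw [div_le_div_iff₀ (by linarith) (by linarith)]
  nlinarith

lemma tendsto_prod :
    Tendsto (fun k => ∏ i ∈ Finset.range k, fp i) atTop (nhds 0) := by
  have hub : ∀ k, ∏ i ∈ Finset.range k, fp i ≤
      Real.exp (-(∑ i ∈ Finset.range k, 2 / ((pr i : ℝ) + 1))) := by
    intro k
    calc ∏ i ∈ Finset.range k, fp i
        ≤ ∏ i ∈ Finset.range k, Real.exp (-(2 / ((pr i : ℝ) + 1))) := by
          apply Finset.prod_le_prod (fun i _ => (fp_pos i).le)
          intro i _
          rw [fp_eq]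
          linarith [Real.add_one_le_exp (-(2 / ((pr i : ℝ) + 1)))]
      _ = Real.exp (-(∑ i ∈ Finset.range k, 2 / ((pr i : ℝ) + 1))) := by
          rw [← Real.exp_sum, ← Finset.sum_neg_distrib]
  have hexp : Tendsto (fun k => Real.exp
      (-(∑ i ∈ Finset.range k, 2 / ((pr i : ℝ) + 1)))) atTop (nhds 0) :=
    Real.tendsto_exp_atBot.comp (tendsto_neg_atTop_atBot.comp tendsto_sum)
  exact tendsto_of_tendsto_of_tendsto_of_le_of_le tendsto_const_nhds hexp
    (fun k => Finset.prod_nonneg (fun i _ => (fp_pos i).le)) hub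

lemma r_step_incl {α : ℝ} {k : ℕ} (h : α ≤ r (seq α k * pr k)) :
    r (seq α (k + 1)) = r (seq α k) * fp k := by
  rw [seq_succ, if_pos h, r_mul (pr_coprime_seq α k).symm]
  rfl

lemma seq_step_not_incl {α : ℝ} {k : ℕ} (h : ¬ α ≤ r (seq α k * pr k)) :
    seq α (k + 1) = seq α k := by
  rw [seq_succ, if_neg h]

lemma r_incl_eq {α : ℝ} (k : ℕ) :
    r (seq α k * pr k) = r (seq α k) * fp k := by
  rw [r_mul (pr_coprime_seq α k).symm]; rfl

lemma alpha_le_r_seq {α : ℝ} (hα1 : α ≤ 1) : ∀ k, α ≤ r (seq α k)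
  | 0 => by
      show α ≤ r 1
      rw [r_one]; exact hα1
  | k + 1 => by
      by_cases h : α ≤ r (seq α k * pr k)
      · rw [seq_succ, if_pos h]; exact h
      · rw [seq_step_not_incl h]; exact alpha_le_r_seq hα1 k

lemma r_seq_antitone (α : ℝ) : Antitone (fun k => r (seq α k)) := by
  apply antitone_nat_of_succ_le
  intro k
  by_cases h : α ≤ r (seq α k * pr k)
  · rw [r_step_incl h]
    calc r (seq α k) * fp k ≤ r (seq α k) * 1 :=
          mul_le_mul_of_nonneg_left (fp_le_one k) (r_pos (seq_pos α k)).le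
      _ = r (seq α k) := mul_one _
  · rw [seq_step_not_incl h]

lemma r_seq_formula {α : ℝ} {J : ℕ} (hJ : ∀ j, J ≤ j → α ≤ r (seq α j * pr j)) :
    ∀ k, r (seq α (J + k)) = r (seq α J) * ∏ i ∈ Finset.Ico J (J + k), fp i
  | 0 => by simp
  | k + 1 => by
      rw [show J + (k + 1) = (J + k) + 1 from rfl,
        r_step_incl (hJ (J + k) (Nat.le_add_right J k)),
        r_seq_formula hJ k, Finset.prod_Ico_succ_top (Nat.le_add_right J k), mul_assoc]

end

end Stmt5Aux

open Stmt5Aux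

/-- For every `α ∈ [0,1]` there is a sequence of squarefree positive integers
`n_k` with `φ(n_k)/σ(n_k) → α`. -/
theorem stmt_5 (α : ℝ) (hα : α ∈ Set.Icc (0 : ℝ) 1) :
    ∃ n : ℕ → ℕ, (∀ k, Squarefree (n k) ∧ 0 < n k) ∧
      Tendsto (fun k => (Nat.totient (n k) : ℝ) / (ArithmeticFunction.sigma 1 (n k) : ℝ))
        atTop (nhds α) := by
  obtain ⟨hα0, hα1⟩ := hα
  refine ⟨seq α, fun k => ⟨seq_squarefree α k, seq_pos α k⟩, ?_⟩
  show Tendsto (fun k => r (seq α k)) atTop (nhds α)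
  by_cases hcase : ∃ J, ∀ j, J ≤ j → α ≤ r (seq α j * pr j)
  · -- eventually always include: ratio → 0, forcing α = 0
    obtain ⟨J, hJ⟩ := hcase
    have htail : Tendsto (fun k => ∏ i ∈ Finset.Ico J (J + k), fp i) atTop (nhds 0) := by
      have hC : (0 : ℝ) < ∏ i ∈ Finset.range J, fp i :=
        Finset.prod_pos (fun i _ => fp_pos i)
      have key : ∀ k, ∏ i ∈ Finset.Ico J (J + k), fp i =
          (∏ i ∈ Finset.range (J + k), fp i) / ∏ i ∈ Finset.range J, fp i := by
        intro k
        rw [eq_div_iff hC.ne', mul_comm, Finset.prod_range_mul_prod_Ico _ (Nat.le_add_right J k)]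
      have h1 : Tendsto (fun k => ∏ i ∈ Finset.range (J + k), fp i) atTop (nhds 0) := by
        have := tendsto_prod.comp (tendsto_add_atTop_nat J)
        simpa [Function.comp_def, Nat.add_comm] using this
      rw [funext key]
      simpa using h1.div_const (∏ i ∈ Finset.range J, fp i)
    have hP0 : Tendsto (fun k => r (seq α k)) atTop (nhds 0) := by
      have hshift : Tendsto (fun k => r (seq α (J + k))) atTop (nhds 0) := by
        rw [funext (r_seq_formula hJ)]
        simpa using htail.const_mul (r (seq α J))
      have hshift' : Tendsto (fun k => r (seq α (k + J))) atTop (nhds 0) :=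
        hshift.congr (fun k => by rw [Nat.add_comm])
      exact (tendsto_add_atTop_iff_nat J).mp hshift'
    have hα00 : α = 0 := le_antisymm (ge_of_tendsto' hP0 (alpha_le_r_seq hα1)) hα0
    have : nhds α = nhds (0 : ℝ) := by rw [hα00]
    rw [this]
    exact hP0
  · -- infinitely many non-inclusions: squeeze to α
    push_neg at hcase
    rw [Metric.tendsto_atTop]
    intro ε hε
    have hdiv : Tendsto (fun k => α / fp k) atTop (nhds α) := by
      have := Tendsto.div (tendsto_const_nhds (x := α)) tendsto_fp one_ne_zero
      rw [div_one] at this; exact this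
    have hev : ∃ K, ∀ k, K ≤ k → α / fp k < α + ε := by
      have := Metric.tendsto_atTop.mp hdiv ε hε
      obtain ⟨K, hK⟩ := this
      refine ⟨K, fun k hk => ?_⟩
      have := hK k hk
      rw [Real.dist_eq, abs_sub_lt_iff] at this
      linarith [this.1]
    obtain ⟨K, hK⟩ := hev
    obtain ⟨k, hkK, hk⟩ := hcase K
    refine ⟨k, fun m hm => ?_⟩
    have h1 : α ≤ r (seq α m) := alpha_le_r_seq hα1 m
    have h2 : r (seq α m) ≤ r (seq α k) := r_seq_antitone α hm
    have h3 : r (seq α k) < α / fp k := by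
      rw [lt_div_iff₀ (fp_pos k)]
      rw [r_incl_eq] at hk
      linarith
    have h4 : α / fp k < α + ε := hK k hkK
    rw [Real.dist_eq, abs_sub_lt_iff]
    constructor <;> linarith
end

section
/- Let χ be a non-principal Dirichlet character mod p and f the completely multiplicative function with f(p) = 1 and f(q) = χ(q) for primes q ≠ p. Then ∑_{j=1}^n f(j) = ∑_{l=0}^{p-1} N(n,l) · (∑_{m=1}^{l} χ(m)), where N(n,l) is the number of digits equal to l in the base-p expansion of n. -/
open Finset

private lemma aux_sum_range_cast {p : ℕ} [NeZero p] [Fintype (ZMod p)] (g : ZMod p → ℂ) :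
    ∑ j ∈ Finset.range p, g (j : ZMod p) = ∑ a : ZMod p, g a := by
  refine Finset.sum_nbij' (fun j => (j : ZMod p)) (fun a => a.val) ?_ ?_ ?_ ?_ ?_
  · intro a _; exact Finset.mem_univ _
  · intro a _; exact Finset.mem_range.mpr (ZMod.val_lt a)
  · intro a ha; exact ZMod.val_natCast_of_lt (Finset.mem_range.mp ha)
  · intro a _; exact ZMod.natCast_rightInverse a
  · intro a _; rfl

-- block sum of χ over p consecutive integers is 0
private lemma aux_block {p : ℕ} (hp : p.Prime) (χ : DirichletCharacter ℂ p) (hχ : χ ≠ 1)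
    (c : ℕ) : ∑ j ∈ Finset.range p, χ ((c + j : ℕ) : ZMod p) = 0 := by
  haveI : NeZero p := ⟨hp.ne_zero⟩
  haveI : Fact p.Prime := ⟨hp⟩
  have h1 : ∑ j ∈ Finset.range p, χ ((c + j : ℕ) : ZMod p)
      = ∑ a : ZMod p, χ ((c : ZMod p) + a) := by
    rw [← aux_sum_range_cast (fun a => χ ((c : ZMod p) + a))]
    simp [Nat.cast_add]
  rw [h1]
  rw [show ∑ a : ZMod p, χ ((c : ZMod p) + a) = ∑ a : ZMod p, χ a from
    Fintype.sum_equiv (Equiv.addLeft (c : ZMod p)) _ _ (fun a => rfl)]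
  exact MulChar.sum_eq_zero_of_ne_one hχ

private lemma aux_chi_period {p : ℕ} (hp : p.Prime) (χ : DirichletCharacter ℂ p) (hχ : χ ≠ 1) :
    ∀ n : ℕ, ∑ j ∈ Finset.range n, χ (j : ZMod p) = ∑ j ∈ Finset.range (n % p), χ (j : ZMod p) := by
  intro n
  induction n using Nat.strong_induction_on with
  | _ n ih =>
    rcases lt_or_ge n p with h | h
    · rw [Nat.mod_eq_of_lt h]
    · have h2 : n - p < n := Nat.sub_lt (hp.pos.trans_le h) hp.pos
      have h3 : n = (n - p) + p := (Nat.sub_add_cancel h).symm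
      have h4 : n % p = (n - p) % p := by
        conv_lhs => rw [h3]
        rw [Nat.add_mod_right]
      rw [h4, ← ih _ h2]
      conv_lhs => rw [h3]
      rw [Finset.sum_range_add]
      rw [aux_block hp χ hχ (n - p)]
      ring


-- f j = χ j when p ∤ j
private lemma aux_f_eq_chi {p : ℕ} (hp : p.Prime) (χ : DirichletCharacter ℂ p)
    (f : ℕ → ℂ) (hf1 : f 1 = 1) (hfmul : ∀ m n, f (m * n) = f m * f n)
    (hfq : ∀ q : ℕ, q.Prime → q ≠ p → f q = χ (q : ZMod p)) :
    ∀ j : ℕ, ¬ (p ∣ j) → f j = χ (j : ZMod p) := by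
  intro j
  induction j using Nat.strong_induction_on with
  | _ j ih =>
    intro hpj
    rcases Nat.eq_zero_or_pos j with rfl | hj0
    · exact absurd (dvd_zero p) hpj
    rcases Nat.lt_or_ge j 2 with hj1 | hj2
    · interval_cases j
      simp [hf1]
    · have hq : j.minFac.Prime := Nat.minFac_prime (by omega)
      have hqd : j.minFac ∣ j := Nat.minFac_dvd j
      have hqp : j.minFac ≠ p := fun h => hpj (h ▸ hqd)
      obtain ⟨k, hk⟩ := hqd
      have hk0 : k ≠ 0 := by rintro rfl; omega
      have hklt : k < j := by
        have := hq.one_lt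
        rw [hk]
        calc k = 1 * k := (one_mul k).symm
        _ < j.minFac * k := by
          exact (Nat.mul_lt_mul_right (Nat.pos_of_ne_zero hk0)).mpr this
      have hpk : ¬ p ∣ k := fun h => hpj (hk ▸ h.mul_left _)
      rw [hk, hfmul, hfq _ hq hqp, ih k hklt hpk, Nat.cast_mul, map_mul]

private lemma aux_chi_blocks {p : ℕ} (hp : p.Prime) (χ : DirichletCharacter ℂ p) (hχ : χ ≠ 1)
    (q r : ℕ) : ∑ j ∈ Finset.range (q * p + r), χ (j : ZMod p)
      = ∑ j ∈ Finset.range r, χ (j : ZMod p) := by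
  induction q with
  | zero => simp
  | succ q ih =>
    have h : (q + 1) * p + r = (q * p + r) + p := by ring
    rw [h, Finset.sum_range_add, aux_block hp χ hχ, ih, add_zero]

private lemma aux_chi_zero {p : ℕ} (hp : p.Prime) (χ : DirichletCharacter ℂ p) :
    χ ((0 : ℕ) : ZMod p) = 0 := by
  haveI : Fact p.Prime := ⟨hp⟩
  rw [Nat.cast_zero]
  exact MulChar.map_nonunit χ not_isUnit_zero

-- partial period sum
private lemma aux_chi_Icc {p : ℕ} (hp : p.Prime) (χ : DirichletCharacter ℂ p) (hχ : χ ≠ 1)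
    (n : ℕ) : ∑ j ∈ Finset.Icc 1 n, χ (j : ZMod p)
      = ∑ m ∈ Finset.Icc 1 (n % p), χ (m : ZMod p) := by
  have key : ∀ m : ℕ, ∑ j ∈ Finset.range (m + 1), χ (j : ZMod p)
      = ∑ j ∈ Finset.Icc 1 m, χ (j : ZMod p) := by
    intro m
    rw [show Finset.range (m + 1) = insert 0 (Finset.Icc 1 m) by
      ext x; simp [Nat.lt_succ_iff]; omega]
    rw [Finset.sum_insert (by simp), aux_chi_zero hp χ, zero_add]
  rw [← key n, ← key (n % p)]
  have h : n + 1 = (n / p) * p + (n % p + 1) := by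
    have h2 : n / p * p + n % p = n := by rw [mul_comm]; exact Nat.div_add_mod n p
    omega
  rw [h, aux_chi_blocks hp χ hχ]

private lemma aux_f_rec {p : ℕ} (hp : p.Prime) (χ : DirichletCharacter ℂ p)
    (f : ℕ → ℂ) (hf1 : f 1 = 1) (hfmul : ∀ m n, f (m * n) = f m * f n)
    (hfp : f p = 1) (hfq : ∀ q : ℕ, q.Prime → q ≠ p → f q = χ (q : ZMod p))
    (n : ℕ) : ∑ j ∈ Finset.Icc 1 n, f j
      = (∑ j ∈ Finset.Icc 1 n, χ (j : ZMod p)) + ∑ k ∈ Finset.Icc 1 (n / p), f k := by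
  haveI : Fact p.Prime := ⟨hp⟩
  haveI : NeZero p := ⟨hp.ne_zero⟩
  rw [← Finset.sum_filter_add_sum_filter_not (Finset.Icc 1 n) (fun j => p ∣ j)]
  have h1 : ∑ j ∈ (Finset.Icc 1 n).filter (fun j => ¬ p ∣ j), f j
      = ∑ j ∈ Finset.Icc 1 n, χ (j : ZMod p) := by
    rw [Finset.sum_congr rfl (fun j hj => aux_f_eq_chi hp χ f hf1 hfmul hfq j
      (Finset.mem_filter.mp hj).2)]
    refine Finset.sum_filter_of_ne ?_
    intro j _ hne hdvd
    apply hne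
    rw [(ZMod.natCast_eq_zero_iff j p).mpr hdvd]
    exact MulChar.map_nonunit χ not_isUnit_zero
  have h2 : ∑ j ∈ (Finset.Icc 1 n).filter (fun j => p ∣ j), f j
      = ∑ k ∈ Finset.Icc 1 (n / p), f k := by
    refine Finset.sum_nbij' (fun j => j / p) (fun k => p * k) ?_ ?_ ?_ ?_ ?_
    · intro j hj
      obtain ⟨hj1, hj2⟩ := Finset.mem_filter.mp hj
      obtain ⟨h1', h2'⟩ := Finset.mem_Icc.mp hj1
      exact Finset.mem_Icc.mpr ⟨Nat.one_le_div_iff hp.pos |>.mpr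
        (Nat.le_of_dvd (by omega) hj2), Nat.div_le_div_right h2'⟩
    · intro k hk
      obtain ⟨hk1, hk2⟩ := Finset.mem_Icc.mp hk
      refine Finset.mem_filter.mpr ⟨Finset.mem_Icc.mpr ⟨Nat.one_le_iff_ne_zero.mpr (Nat.mul_ne_zero hp.ne_zero (by omega)), ?_⟩, ⟨k, rfl⟩⟩
      calc p * k ≤ p * (n / p) := Nat.mul_le_mul_left p hk2
      _ ≤ n := Nat.mul_div_le n p
    · intro j hj
      exact Nat.mul_div_cancel' (Finset.mem_filter.mp hj).2
    · intro k _
      exact Nat.mul_div_cancel_left k hp.pos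
    · intro j hj
      obtain ⟨hj1, hj2⟩ := Finset.mem_filter.mp hj
      conv_lhs => rw [← Nat.mul_div_cancel' hj2]
      rw [hfmul, hfp, one_mul]
  rw [h1, h2]; ring

/-- For a non-principal Dirichlet character `χ` mod `p` and the completely
multiplicative `f` with `f(p) = 1`, `f(q) = χ(q)` at primes `q ≠ p`,
`∑_{j=1}^n f(j) = ∑_{l=0}^{p-1} N(n,l) ∑_{m=1}^{l} χ(m)` where `N(n,l)` counts
digits equal to `l` in the base-`p` expansion of `n`. -/
theorem stmt_10 (p : ℕ) (hp : p.Prime) (χ : DirichletCharacter ℂ p)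
    (hχ : χ ≠ 1)
    (f : ℕ → ℂ) (hf1 : f 1 = 1) (hfmul : ∀ m n, f (m * n) = f m * f n)
    (hfp : f p = 1) (hfq : ∀ q : ℕ, q.Prime → q ≠ p → f q = χ (q : ZMod p))
    (n : ℕ) :
    ∑ j ∈ Finset.Icc 1 n, f j
      = ∑ l ∈ Finset.range p,
          ((Nat.digits p n).count l : ℂ) * ∑ m ∈ Finset.Icc 1 l, χ (m : ZMod p) := by
  induction n using Nat.strong_induction_on with
  | _ n ih =>
    rcases Nat.eq_zero_or_pos n with rfl | hn
    · simp
    · have hdiv : n / p < n := Nat.div_lt_self hn hp.one_lt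
      rw [aux_f_rec hp χ f hf1 hfmul hfp hfq n, aux_chi_Icc hp χ hχ n, ih _ hdiv,
        Nat.digits_def' hp.one_lt hn]
      have hcount : ∀ l ∈ Finset.range p,
          ((n % p :: Nat.digits p (n / p)).count l : ℂ) * ∑ m ∈ Finset.Icc 1 l, χ (m : ZMod p)
          = ((Nat.digits p (n / p)).count l : ℂ) * (∑ m ∈ Finset.Icc 1 l, χ (m : ZMod p))
            + (if n % p = l then ∑ m ∈ Finset.Icc 1 l, χ (m : ZMod p) else 0) := by
        intro l _
        rw [List.count_cons]
        push_cast
        rw [add_mul]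
        congr 1
        simp only [beq_iff_eq, ite_mul, one_mul, zero_mul]
      rw [Finset.sum_congr rfl hcount, Finset.sum_add_distrib,
        Finset.sum_ite_eq (Finset.range p) (n % p)]
      rw [if_pos (Finset.mem_range.mpr (Nat.mod_lt n hp.pos))]
      ring
end

section
/- If n = a_0 + a_1 p + ... + a_k p^k is the base-p expansion of n, then L_p(n) = ∑_{j=0}^{k} ∑_{l=1}^{a_j} λ_p(l). -/
private lemma f_eq_chi (p : ℕ) [Fact p.Prime] (f : ℕ → ℤ) (hf1 : f 1 = 1)
    (hfmul : ∀ m n, f (m * n) = f m * f n)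
    (hfq : ∀ q : ℕ, q.Prime → q ≠ p → f q = legendreSym p q) :
    ∀ m : ℕ, ¬ p ∣ m → f m = legendreSym p m := by
  intro m
  induction m using Nat.recOnMul with
  | zero => intro h; exact absurd (dvd_zero p) h
  | one => intro _; simp [hf1]
  | prime q hq =>
      intro h
      have hqp : q ≠ p := by rintro rfl; exact h dvd_rfl
      exact hfq q hq hqp
  | mul a b ha hb =>
      intro h
      have hpa : ¬ p ∣ a := fun hd => h (hd.mul_right b)
      have hpb : ¬ p ∣ b := fun hd => h (hd.mul_left a)
      rw [hfmul, ha hpa, hb hpb]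
      push_cast
      rw [legendreSym.mul]

private lemma chi_block (p : ℕ) [Fact p.Prime] (hodd : p ≠ 2) (c : ℤ) :
    ∑ j ∈ Finset.range p, legendreSym p (c + (j : ℕ)) = 0 := by
  have hchar : ringChar (ZMod p) ≠ 2 := by
    rw [ZMod.ringChar_zmod_n]; exact hodd
  have h1 : ∑ j ∈ Finset.range p, legendreSym p (c + (j : ℕ))
      = ∑ x : ZMod p, (quadraticChar (ZMod p) ((c : ZMod p) + x) : ℤ) := by
    apply Finset.sum_bij (fun (j : ℕ) (_ : j ∈ Finset.range p) => ((j : ℕ) : ZMod p))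
    · intro a _; exact Finset.mem_univ _
    · intro a ha b hb hab
      have ha' : a < p := Finset.mem_range.mp ha
      have hb' : b < p := Finset.mem_range.mp hb
      have := congrArg ZMod.val hab
      rwa [ZMod.val_cast_of_lt ha', ZMod.val_cast_of_lt hb'] at this
    · intro x _
      refine ⟨x.val, Finset.mem_range.mpr (ZMod.val_lt x), ?_⟩
      simp [ZMod.natCast_val]
    · intro a _
      rw [legendreSym]
      push_cast
      ring_nf
  rw [h1]
  calc ∑ x : ZMod p, (quadraticChar (ZMod p) ((c : ZMod p) + x) : ℤ)
      = ∑ y : ZMod p, (quadraticChar (ZMod p) y : ℤ) := by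
        apply Fintype.sum_equiv (Equiv.addLeft (c : ZMod p))
        intro x; rfl
    _ = 0 := quadraticChar_sum_zero hchar

private lemma block_sum (p : ℕ) [Fact p.Prime] (hodd : p ≠ 2)
    (f : ℕ → ℤ) (hf1 : f 1 = 1) (hfmul : ∀ m n, f (m * n) = f m * f n)
    (hfp : f p = 1) (hfq : ∀ q : ℕ, q.Prime → q ≠ p → f q = legendreSym p q)
    (n : ℕ) :
    ∑ m ∈ Finset.Ioc n (n + p), f m = f (n / p + 1) := by
  have hp1 : 1 < p := (Fact.out : p.Prime).one_lt
  have hp0 : 0 < p := by omega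
  have hmod : n % p < p := Nat.mod_lt n hp0
  have hdm := Nat.div_add_mod n p
  set j0 : ℕ := p - 1 - n % p with hj0
  have hj0lt : j0 < p := by omega
  have hj0eq : n + 1 + j0 = p * (n / p + 1) := by
    have hx : p * (n / p + 1) = p * (n / p) + p := by ring
    omega
  have hj0eqZ : (n : ℤ) + 1 + (j0 : ℕ) = (p : ℤ) * ((n / p + 1 : ℕ) : ℤ) := by
    exact_mod_cast hj0eq
  have hkey : ∑ m ∈ Finset.Ioc n (n + p), f m
      = ∑ j ∈ Finset.range p, f (n + 1 + j) := by
    have he : Finset.Ioc n (n + p) = Finset.Ico (n + 1) (n + p + 1) := by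
      rw [Finset.Ico_add_one_right_eq_Icc, Finset.Icc_add_one_left_eq_Ioc]
    rw [he, Finset.sum_Ico_eq_sum_range]
    have he2 : n + p + 1 - (n + 1) = p := by omega
    rw [he2]
  rw [hkey]
  have hsplit : ∀ j ∈ Finset.range p,
      f (n + 1 + j) = legendreSym p ((n : ℤ) + 1 + (j : ℕ))
        + (if j = j0 then f (n / p + 1) else 0) := by
    intro j hj
    by_cases hjj : j = j0
    · subst hjj
      have h1 : f (n + 1 + j0) = f (n / p + 1) := by
        rw [hj0eq, hfmul, hfp, one_mul]
      have h2 : legendreSym p ((n : ℤ) + 1 + (j0 : ℕ)) = 0 := by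
        rw [legendreSym.eq_zero_iff]
        rw [hj0eqZ]
        push_cast
        simp [ZMod.natCast_self]
      rw [h1, h2, if_pos rfl, zero_add]
    · have hjlt : j < p := Finset.mem_range.mp hj
      have hnd : ¬ p ∣ (n + 1 + j) := by
        intro hd
        apply hjj
        have hd0 : (p : ℤ) ∣ ((n : ℤ) + 1 + j0) := ⟨(n / p + 1 : ℕ), hj0eqZ⟩
        have hd1 : (p : ℤ) ∣ ((n : ℤ) + 1 + j) := by
          obtain ⟨k, hk⟩ := hd
          exact ⟨k, by exact_mod_cast hk⟩
        have hdd : (p : ℤ) ∣ ((j : ℤ) - (j0 : ℤ)) := by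
          have := dvd_sub hd1 hd0
          simpa using this
        have habs : |(j : ℤ) - (j0 : ℤ)| < p := by
          rw [abs_lt]
          constructor <;> [push_cast; push_cast] <;> omega
        have := Int.eq_zero_of_abs_lt_dvd hdd habs
        omega
      have := f_eq_chi p f hf1 hfmul hfq (n + 1 + j) hnd
      rw [this, if_neg hjj, add_zero]
      norm_cast
  rw [Finset.sum_congr rfl hsplit, Finset.sum_add_distrib]
  rw [chi_block p hodd ((n : ℤ) + 1)]
  rw [Finset.sum_ite_eq' (Finset.range p) j0 (fun _ => f (n / p + 1))]
  rw [if_pos (Finset.mem_range.mpr hj0lt)]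
  ring

private lemma main_rec (p : ℕ) [Fact p.Prime] (hodd : p ≠ 2)
    (f : ℕ → ℤ) (hf1 : f 1 = 1) (hfmul : ∀ m n, f (m * n) = f m * f n)
    (hfp : f p = 1) (hfq : ∀ q : ℕ, q.Prime → q ≠ p → f q = legendreSym p q) :
    ∀ n : ℕ, ∑ m ∈ Finset.Icc 1 n, f m
      = ∑ m ∈ Finset.Icc 1 (n / p), f m + ∑ l ∈ Finset.Icc 1 (n % p), f l := by
  have hp1 : 1 < p := (Fact.out : p.Prime).one_lt
  intro n
  induction n using Nat.strong_induction_on with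
  | _ n ih =>
    by_cases hn : n < p
    · rw [Nat.div_eq_of_lt hn, Nat.mod_eq_of_lt hn]
      simp
    · push_neg at hn
      set m := n - p with hm
      have hmn : m < n := by omega
      have hnm : n = m + p := by omega
      have hsplit : ∑ x ∈ Finset.Icc 1 n, f x
          = ∑ x ∈ Finset.Icc 1 m, f x + ∑ x ∈ Finset.Ioc m (m + p), f x := by
        rw [show Finset.Icc 1 n = Finset.Ioc 0 n from rfl,
            show Finset.Icc 1 m = Finset.Ioc 0 m from rfl, hnm]
        exact (Finset.sum_Ioc_consecutive _ (Nat.zero_le m) (Nat.le_add_right m p)).symm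
      rw [hsplit, block_sum p hodd f hf1 hfmul hfp hfq m, ih m hmn]
      have h1 : n % p = m % p := by rw [hnm, Nat.add_mod_right]
      have h2 : n / p = m / p + 1 := by
        rw [hnm, Nat.add_div_right _ (by omega)]
      rw [h1, h2]
      rw [Finset.sum_Icc_succ_top (Nat.le_add_left 1 (m / p))]
      ring

/-- If `n = a_0 + a_1 p + … + a_k p^k` in base `p`, then
`L_p(n) = ∑_j ∑_{l=1}^{a_j} λ_p(l)`. -/
theorem stmt_11 (p : ℕ) [Fact p.Prime] (hodd : p ≠ 2)
    (f : ℕ → ℤ) (hf1 : f 1 = 1) (hfmul : ∀ m n, f (m * n) = f m * f n)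
    (hfp : f p = 1) (hfq : ∀ q : ℕ, q.Prime → q ≠ p → f q = legendreSym p q)
    (n : ℕ) :
    ∑ m ∈ Finset.Icc 1 n, f m
      = ((Nat.digits p n).map fun a => ∑ l ∈ Finset.Icc 1 a, f l).sum := by
  have hp1 : 1 < p := (Fact.out : p.Prime).one_lt
  induction n using Nat.strong_induction_on with
  | _ n ih =>
    rcases Nat.eq_zero_or_pos n with rfl | hn
    · simp
    · rw [Nat.digits_def' hp1 hn, List.map_cons, List.sum_cons,
        ← ih (n / p) (Nat.div_lt_self hn hp1),
        main_rec p hodd f hf1 hfmul hfp hfq n]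
      ring
end

section
/- L_3(n) equals the number of digits equal to 1 in the base-3 expansion of n. -/
private def chi (m : ℕ) : ℤ := if m % 3 = 1 then 1 else -1

private lemma chi_mul (a b : ℕ) (ha : ¬ 3 ∣ a) (hb : ¬ 3 ∣ b) :
    chi (a * b) = chi a * chi b := by
  unfold chi
  have h : (a * b) % 3 = (a % 3) * (b % 3) % 3 := Nat.mul_mod a b 3
  have ha' : a % 3 = 1 ∨ a % 3 = 2 := by omega
  have hb' : b % 3 = 1 ∨ b % 3 = 2 := by omega
  rcases ha' with h1 | h1 <;> rcases hb' with h2 | h2 <;>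
    simp [h, h1, h2]

private lemma legendre_eq_chi (q : ℕ) (hq : ¬ 3 ∣ q) : (legendreSym 3 q : ℤ) = chi q := by
  have h := legendreSym.mod 3 (q : ℤ)
  have hmod : ((q : ℤ)) % ((3:ℕ) : ℤ) = ((q % 3 : ℕ) : ℤ) := by
    push_cast
    omega
  rw [hmod] at h
  have hq' : q % 3 = 1 ∨ q % 3 = 2 := by omega
  unfold chi
  rcases hq' with h1 | h1 <;> rw [h, h1] <;> simp <;> decide

/-- `L_3(n)` equals the number of `1`s in the base-`3` expansion of `n`. -/
theorem stmt_12
    (f : ℕ → ℤ) (hf1 : f 1 = 1) (hfmul : ∀ m n, f (m * n) = f m * f n)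
    (hfp : f 3 = 1) (hfq : ∀ q : ℕ, q.Prime → q ≠ 3 → f q = legendreSym 3 q)
    (n : ℕ) :
    ∑ m ∈ Finset.Icc 1 n, f m = ((Nat.digits 3 n).count 1 : ℤ) := by
  -- f m = chi m for m ≥ 1 not divisible by 3
  have key : ∀ m : ℕ, 1 ≤ m → ¬ 3 ∣ m → f m = chi m := by
    intro m
    induction m using Nat.strong_induction_on with
    | _ m ih =>
      intro hm1 hm3
      rcases eq_or_lt_of_le hm1 with h1 | h1
      · rw [← h1, hf1]; decide
      · set q := m.minFac with hq
        have hm2 : m ≠ 1 := by omega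
        have hqp : q.Prime := Nat.minFac_prime hm2
        have hqd : q ∣ m := Nat.minFac_dvd m
        have hq3 : q ≠ 3 := by
          intro h; exact hm3 (h ▸ hqd)
        obtain ⟨c, hc⟩ := hqd
        have hc3 : ¬ 3 ∣ c := fun h => hm3 (hc ▸ h.mul_left q)
        have hc1 : 1 ≤ c := Nat.pos_of_ne_zero (by rintro rfl; simp at hc; omega)
        have hclt : c < m := by
          have : 2 ≤ q := hqp.two_le
          nlinarith
        have hq3' : ¬ 3 ∣ q := by
          intro h
          exact hq3 ((Nat.prime_dvd_prime_iff_eq Nat.prime_three hqp).mp h).symm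
        rw [hc, hfmul, hfq q hqp hq3, legendre_eq_chi q hq3',
          ih c hclt hc1 hc3, chi_mul q c hq3' hc3]
  -- sum of (if 3∣m then 0 else chi m) over Icc 1 n is [n%3=1]
  have partial_sum : ∀ n : ℕ,
      (∑ m ∈ Finset.Icc 1 n, if 3 ∣ m then 0 else chi m) =
        if n % 3 = 1 then 1 else 0 := by
    intro n
    induction n with
    | zero => simp
    | succ n ihn =>
      rw [Finset.sum_Icc_succ_top (by omega), ihn]
      unfold chi
      have h : (n + 1) % 3 = (n % 3 + 1) % 3 := by omega
      have hd : (3 ∣ (n+1)) ↔ (n + 1) % 3 = 0 := by omega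
      have : n % 3 = 0 ∨ n % 3 = 1 ∨ n % 3 = 2 := by omega
      rcases this with h1 | h1 | h1 <;> simp [hd, h, h1]
  -- main induction
  induction n using Nat.strong_induction_on with
  | _ n ih =>
    rcases Nat.eq_zero_or_pos n with h0 | h0
    · simp [h0]
    · have hdig : Nat.digits 3 n = n % 3 :: Nat.digits 3 (n / 3) :=
        Nat.digits_def' (by norm_num) h0
      have hk : n / 3 < n := Nat.div_lt_self h0 (by norm_num)
      have split : ∀ m : ℕ, f m =
          (if 3 ∣ m then 0 else chi m) + (if 3 ∣ m then f m else 0) → True := fun _ _ => trivial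
      have hsum : ∑ m ∈ Finset.Icc 1 n, f m =
          (∑ m ∈ Finset.Icc 1 n, if 3 ∣ m then 0 else chi m) +
          (∑ m ∈ Finset.Icc 1 n, if 3 ∣ m then f m else 0) := by
        rw [← Finset.sum_add_distrib]
        apply Finset.sum_congr rfl
        intro m hm
        simp only [Finset.mem_Icc] at hm
        by_cases h3 : 3 ∣ m
        · simp [h3]
        · simp [h3, key m hm.1 h3]
      have himg : Finset.filter (fun m => 3 ∣ m) (Finset.Icc 1 n) =
          (Finset.Icc 1 (n / 3)).image (fun j => 3 * j) := by
        ext m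
        simp only [Finset.mem_filter, Finset.mem_Icc, Finset.mem_image]
        constructor
        · rintro ⟨⟨h1, h2⟩, c, hc⟩
          exact ⟨c, by omega, by omega⟩
        · rintro ⟨j, ⟨h1, h2⟩, h3⟩
          exact ⟨by omega, j, by omega⟩
      have hmul_sum : (∑ m ∈ Finset.Icc 1 n, if 3 ∣ m then f m else 0) =
          ∑ j ∈ Finset.Icc 1 (n / 3), f j := by
        rw [← Finset.sum_filter, himg, Finset.sum_image (by intro a _ b _ h; have h' : 3 * a = 3 * b := h; omega)]
        apply Finset.sum_congr rfl
        intro j _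
        rw [hfmul, hfp, one_mul]
      rw [hsum, partial_sum, hmul_sum, ih (n / 3) hk, hdig]
      rw [List.count_cons]
      push_cast
      by_cases h1 : n % 3 = 1 <;> simp [h1] <;> ring
end

section
/- For all n ≥ 1, 0 ≤ L_3(n) ≤ ⌊log_3 n⌋ + 1. -/
/-- For all `n ≥ 1`, `0 ≤ L_3(n) ≤ ⌊log_3 n⌋ + 1`. -/
theorem stmt_13
    (f : ℕ → ℤ) (hf1 : f 1 = 1) (hfmul : ∀ m n, f (m * n) = f m * f n)
    (hfp : f 3 = 1) (hfq : ∀ q : ℕ, q.Prime → q ≠ 3 → f q = legendreSym 3 q)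
    (n : ℕ) (hn : 1 ≤ n) :
    0 ≤ ∑ m ∈ Finset.Icc 1 n, f m ∧
      ∑ m ∈ Finset.Icc 1 n, f m ≤ (Nat.log 3 n : ℤ) + 1 := by
  -- value of f on residues mod 3
  have hchi : ∀ m : ℕ, 1 ≤ m → (m % 3 = 1 → f m = 1) ∧ (m % 3 = 2 → f m = -1) := by
    intro m
    induction m using Nat.strong_induction_on with
    | _ m ih =>
      intro hm
      by_cases hp : m.Prime
      · constructor
        · intro h1
          rw [hfq m hp (by omega), legendreSym.mod]
          have : (m : ℤ) % 3 = 1 := by omega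
          push_cast
          rw [this]; decide
        · intro h2
          rw [hfq m hp (by omega), legendreSym.mod]
          have : (m : ℤ) % 3 = 2 := by omega
          push_cast
          rw [this]; decide
      · rcases Nat.lt_or_ge m 2 with h2 | h2
        · have : m = 1 := by omega
          subst this
          exact ⟨fun _ => hf1, fun h => by omega⟩
        · obtain ⟨a, ha, ha2, halt⟩ := Nat.exists_dvd_of_not_prime2 h2 hp
          obtain ⟨b, rfl⟩ := ha
          have hb0 : b ≠ 0 := by rintro rfl; simp at hm
          have hb1 : b ≠ 1 := by rintro rfl; simp at halt
          have hblt : b < a * b := by nlinarith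
          obtain ⟨ia1, ia2⟩ := ih a halt (by omega)
          obtain ⟨ib1, ib2⟩ := ih b hblt (by omega)
          have hab := Nat.mul_mod a b 3
          have h3a : a % 3 = 0 ∨ a % 3 = 1 ∨ a % 3 = 2 := by omega
          have h3b : b % 3 = 0 ∨ b % 3 = 1 ∨ b % 3 = 2 := by omega
          constructor
          · intro h
            rw [hfmul]
            rcases h3a with ha' | ha' | ha' <;> rcases h3b with hb' | hb' | hb' <;>
              rw [ha', hb'] at hab <;> norm_num at hab <;>
              first
              | omega
              | (rw [ia1 ha', ib1 hb']; norm_num)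
              | (rw [ia2 ha', ib2 hb']; norm_num)
              | (rw [ia1 ha', ib2 hb']; norm_num)
              | (rw [ia2 ha', ib1 hb']; norm_num)
          · intro h
            rw [hfmul]
            rcases h3a with ha' | ha' | ha' <;> rcases h3b with hb' | hb' | hb' <;>
              rw [ha', hb'] at hab <;> norm_num at hab <;>
              first
              | omega
              | (rw [ia1 ha', ib1 hb']; norm_num)
              | (rw [ia2 ha', ib2 hb']; norm_num)
              | (rw [ia1 ha', ib2 hb']; norm_num)
              | (rw [ia2 ha', ib1 hb']; norm_num)
  have h3 : ∀ k, f (3 * k) = f k := fun k => by rw [hfmul, hfp, one_mul]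
  -- the key recursion for partial sums
  have key : ∀ n : ℕ, ∑ m ∈ Finset.Icc 1 n, f m
      = ∑ k ∈ Finset.Icc 1 (n / 3), f k + (if n % 3 = 1 then (1 : ℤ) else 0) := by
    intro n
    induction n with
    | zero => simp
    | succ n ih =>
      rw [Finset.sum_Icc_succ_top (by omega)]
      have hm : (n+1) % 3 = 0 ∨ (n+1) % 3 = 1 ∨ (n+1) % 3 = 2 := by omega
      rcases hm with h | h | h
      · have hd : (n+1)/3 = n/3 + 1 := by omega
        have hn3 : n % 3 = 2 := by omega
        have hval : f (n+1) = f (n/3 + 1) := by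
          have he : n + 1 = 3 * (n/3 + 1) := by omega
          rw [he, h3]
        rw [ih, hd, Finset.sum_Icc_succ_top (by omega), hval]
        simp [h, hn3]
      · have hd : (n+1)/3 = n/3 := by omega
        have hn3 : n % 3 ≠ 1 := by omega
        rw [ih, hd, (hchi (n+1) (by omega)).1 h]
        simp [h, hn3]
      · have hd : (n+1)/3 = n/3 := by omega
        have hn3 : n % 3 = 1 := by omega
        rw [ih, hd, (hchi (n+1) (by omega)).2 h]
        simp [h, hn3]
  -- main strong induction
  induction n using Nat.strong_induction_on with
  | _ n ih =>
    rcases Nat.lt_or_ge n 3 with h3' | h3'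
    · interval_cases n
      · simp [hf1, Nat.log_one_right]
      · have hf2 : f 2 = -1 := (hchi 2 (by norm_num)).2 (by norm_num)
        have hl : Nat.log 3 2 = 0 := Nat.log_eq_zero_iff.mpr (Or.inl (by norm_num))
        rw [show Finset.Icc 1 2 = {1, 2} from rfl]
        simp [hf1, hf2, hl]
      -- n = 2 handled? interval_cases gives n=1,2
    · have h13 : 1 ≤ n / 3 := by omega
      have hlt : n / 3 < n := by omega
      obtain ⟨l, u⟩ := ih (n / 3) hlt h13
      have hlog : Nat.log 3 n = Nat.log 3 (n / 3) + 1 := by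
        have hp := Nat.log_pos (b := 3) (by norm_num) h3'
        have hd := Nat.log_div_base 3 n
        omega
      rw [key n, hlog]
      constructor
      · have : (0:ℤ) ≤ if n % 3 = 1 then (1:ℤ) else 0 := by split <;> norm_num
        linarith
      · have : (if n % 3 = 1 then (1:ℤ) else 0) ≤ 1 := by split <;> norm_num
        push_cast
        linarith
end

section
/- L_5(n) equals the number of digits equal to 1 minus the number of digits equal to 3 in the base-5 expansion of n; consequently |L_5(n)| ≤ ⌊log_5 n⌋ + 1 for all n ≥ 1. -/
private def fact5' : Fact (Nat.Prime 5) := ⟨by norm_num⟩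
private lemma leg1' : @legendreSym 5 fact5' ((1:ℕ):ℤ) = 1 := by decide
private lemma leg2' : @legendreSym 5 fact5' ((2:ℕ):ℤ) = -1 := by decide
private lemma leg3' : @legendreSym 5 fact5' ((3:ℕ):ℤ) = -1 := by decide
private lemma leg4' : @legendreSym 5 fact5' ((4:ℕ):ℤ) = 1 := by decide

/-- `L_5(n)` equals the number of `1`s minus the number of `3`s in the base-`5`
expansion of `n`; consequently `|L_5(n)| ≤ ⌊log_5 n⌋ + 1` for `n ≥ 1`. -/
theorem stmt_14 [Fact (Nat.Prime 5)]
    (f : ℕ → ℤ) (hf1 : f 1 = 1) (hfmul : ∀ m n, f (m * n) = f m * f n)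
    (hfp : f 5 = 1) (hfq : ∀ q : ℕ, q.Prime → q ≠ 5 → f q = legendreSym 5 q) :
    (∀ n : ℕ, ∑ m ∈ Finset.Icc 1 n, f m
        = ((Nat.digits 5 n).count 1 : ℤ) - ((Nat.digits 5 n).count 3 : ℤ)) ∧
      ∀ n : ℕ, 1 ≤ n →
        |∑ m ∈ Finset.Icc 1 n, f m| ≤ (Nat.log 5 n : ℤ) + 1 := by
  have l1 : legendreSym 5 ((1:ℕ):ℤ) = 1 := leg1'
  have l2 : legendreSym 5 ((2:ℕ):ℤ) = -1 := leg2'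
  have l3 : legendreSym 5 ((3:ℕ):ℤ) = -1 := leg3'
  have l4 : legendreSym 5 ((4:ℕ):ℤ) = 1 := leg4' 
  -- f equals the Legendre symbol on numbers coprime to 5
  have hleg : ∀ m : ℕ, ¬ (5 ∣ m) → f m = legendreSym 5 m := by
    intro m
    induction m using Nat.strong_induction_on with
    | _ m ih =>
      intro hm
      have hm0 : m ≠ 0 := by rintro rfl; exact hm ⟨0, rfl⟩
      rcases eq_or_ne m 1 with rfl | hm1
      · rw [hf1]; exact l1.symm
      · have hp : (m.minFac).Prime := Nat.minFac_prime hm1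
        have hpd : m.minFac ∣ m := Nat.minFac_dvd m
        have hp5 : m.minFac ≠ 5 := fun h => hm (h ▸ hpd)
        have hdvd : m / m.minFac ∣ m := ⟨m.minFac, (Nat.div_mul_cancel hpd).symm⟩
        have hlt : m / m.minFac < m :=
          Nat.div_lt_self (Nat.pos_of_ne_zero hm0) hp.one_lt
        have h5d : ¬ (5 ∣ m / m.minFac) := fun h => hm (h.trans hdvd)
        have heq : m = m.minFac * (m / m.minFac) := (Nat.mul_div_cancel' hpd).symm
        have step1 : f m = f m.minFac * f (m / m.minFac) := by
          conv_lhs => rw [heq]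
          exact hfmul _ _
        rw [step1, hfq _ hp hp5, ih _ hlt h5d, ← legendreSym.mul]
        congr 1
        rw [← Nat.cast_mul, ← heq]
  -- values on residues
  have hval : ∀ k j : ℕ, 0 < j → j < 5 →
      f (5 * k + j) = legendreSym 5 (j:ℤ) := by
    intro k j hj1 hj2
    have hnd : ¬ (5 ∣ 5 * k + j) := by omega
    rw [hleg _ hnd, legendreSym.mod]
    congr 1
    push_cast
    omega
  have h5k : ∀ k, f (5 * k) = f k := by
    intro k; rw [hfmul, hfp, one_mul]
  set T : ℕ → ℤ := fun n => ∑ m ∈ Finset.Icc 1 n, f m with hT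
  have hsucc : ∀ n : ℕ, T (n + 1) = T n + f (n + 1) := by
    intro n; exact Finset.sum_Icc_succ_top (by omega) f
  have hT5 : ∀ q, T (5 * q) = T q := by
    intro q
    induction q with
    | zero => rfl
    | succ q ih =>
      rw [show 5 * (q + 1) = 5 * q + 1 + 1 + 1 + 1 + 1 by ring]
      simp only [hsucc]
      rw [ih]
      rw [show 5*q+1+1 = 5*q+2 by ring, show 5*q+2+1 = 5*q+3 by ring,
        show 5*q+3+1 = 5*q+4 by ring, show 5*q+4+1 = 5*(q+1) by ring]
      rw [h5k (q+1), hval q 1 (by norm_num) (by norm_num),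
        hval q 2 (by norm_num) (by norm_num), hval q 3 (by norm_num) (by norm_num),
        hval q 4 (by norm_num) (by norm_num), l1, l2, l3, l4]
      ring
  have hstep : ∀ q r : ℕ, r < 5 → T (5 * q + r)
      = T q + (if r = 1 then (1:ℤ) else if r = 3 then -1 else 0) := by
    intro q r hr
    interval_cases r
    · simpa using hT5 q
    · simp only [hsucc]
      rw [hT5, hval q 1 (by norm_num) (by norm_num), l1]
      norm_num
    · rw [show 5*q+2 = 5*q+1+1 by ring]
      simp only [hsucc]
      rw [hT5, show 5*q+1+1 = 5*q+2 by ring,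
        hval q 1 (by norm_num) (by norm_num), hval q 2 (by norm_num) (by norm_num),
        l1, l2]
      norm_num
    · rw [show 5*q+3 = 5*q+1+1+1 by ring]
      simp only [hsucc]
      rw [hT5, show 5*q+1+1 = 5*q+2 by ring, show 5*q+2+1 = 5*q+3 by ring,
        hval q 1 (by norm_num) (by norm_num), hval q 2 (by norm_num) (by norm_num),
        hval q 3 (by norm_num) (by norm_num), l1, l2, l3]
      norm_num
    · rw [show 5*q+4 = 5*q+1+1+1+1 by ring]
      simp only [hsucc]
      rw [hT5, show 5*q+1+1 = 5*q+2 by ring, show 5*q+2+1 = 5*q+3 by ring,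
        show 5*q+3+1 = 5*q+4 by ring,
        hval q 1 (by norm_num) (by norm_num), hval q 2 (by norm_num) (by norm_num),
        hval q 3 (by norm_num) (by norm_num), hval q 4 (by norm_num) (by norm_num),
        l1, l2, l3, l4]
      norm_num
  have main : ∀ n : ℕ, T n
      = ((Nat.digits 5 n).count 1 : ℤ) - ((Nat.digits 5 n).count 3 : ℤ) := by
    intro n
    induction n using Nat.strong_induction_on with
    | _ n ih =>
      rcases Nat.eq_zero_or_pos n with rfl | hn
      · simp [hT]
      · have hd : Nat.digits 5 n = n % 5 :: Nat.digits 5 (n / 5) :=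
          Nat.digits_def' (by norm_num) hn
        have hq : n / 5 < n := Nat.div_lt_self hn (by norm_num)
        have hrw : 5 * (n / 5) + n % 5 = n := Nat.div_add_mod n 5
        have hmod : n % 5 < 5 := Nat.mod_lt _ (by norm_num)
        have hkey := hstep (n / 5) (n % 5) hmod
        rw [hrw] at hkey
        rw [hkey, ih _ hq, hd]
        have h5 : n % 5 = 0 ∨ n % 5 = 1 ∨ n % 5 = 2 ∨ n % 5 = 3 ∨ n % 5 = 4 := by
          omega
        rcases h5 with h | h | h | h | h <;>
          simp [h, List.count_cons] <;> push_cast <;> ring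
  refine ⟨fun n => main n, fun n hn => ?_⟩
  show |T n| ≤ (Nat.log 5 n : ℤ) + 1
  rw [main n]
  have hcount : ∀ l : List ℕ, l.count 1 + l.count 3 ≤ l.length := by
    intro l
    induction l with
    | nil => simp
    | cons a l ih =>
        simp only [List.count_cons, List.length_cons, beq_iff_eq]
        split_ifs <;> omega
  have hlen : (Nat.digits 5 n).length = Nat.log 5 n + 1 :=
    Nat.digits_len 5 n (by norm_num) (by omega)
  have h1 := hcount (Nat.digits 5 n)
  rw [hlen] at h1
  have h2 : ((Nat.digits 5 n).count 1 : ℤ) + ((Nat.digits 5 n).count 3 : ℤ)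
      ≤ (Nat.log 5 n : ℤ) + 1 := by exact_mod_cast h1
  have c1 : (0:ℤ) ≤ ((Nat.digits 5 n).count 1 : ℤ) := Int.natCast_nonneg _
  have c3 : (0:ℤ) ≤ ((Nat.digits 5 n).count 3 : ℤ) := Int.natCast_nonneg _
  rcases abs_cases (((Nat.digits 5 n).count 1 : ℤ) - ((Nat.digits 5 n).count 3 : ℤ))
    with ⟨h, _⟩ | ⟨h, _⟩ <;> rw [h] <;> linarith
end

section
/- L_p(n) ≥ 0 for all n ∈ ℕ if and only if ∑_{m=1}^{k} (m/p) ≥ 0 for all 1 ≤ k ≤ p. -/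
section aux

variable (p : ℕ) [Fact p.Prime]

/-- periodicity of the Legendre symbol. -/
lemma leg_period (m : ℕ) : legendreSym p ((m + p : ℕ)) = legendreSym p m := by
  rw [legendreSym.mod p ((m + p : ℕ) : ℤ), legendreSym.mod p (m : ℤ)]
  push_cast
  congr 1
  conv_lhs => rw [show ((m : ℤ) + p) = m + p * 1 by ring]
  rw [Int.add_mul_emod_self_left]

/-- sum over `p` consecutive values is independent of the starting point. -/
lemma leg_window (a : ℕ) :
    ∑ j ∈ Finset.range p, legendreSym p ((a + j : ℕ)) =
      ∑ j ∈ Finset.range p, legendreSym p (j : ℕ) := by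
  induction a with
  | zero => simp
  | succ a ih =>
    rw [← ih]
    have hp : 0 < p := (Fact.out : p.Prime).pos
    obtain ⟨P, rfl⟩ : ∃ P, p = P + 1 := ⟨p - 1, by omega⟩
    rw [Finset.sum_range_succ' (fun j => legendreSym (P + 1) ((a + j : ℕ))) P,
      Finset.sum_range_succ (fun j => legendreSym (P + 1) ((a + 1 + j : ℕ))) P]
    have h1 : (fun j => legendreSym (P + 1) ((a + 1 + j : ℕ))) =
        fun j => legendreSym (P + 1) ((a + (j + 1) : ℕ)) := by
      funext j; congr 1; omega
    have h2 : ((a + 1 + P : ℕ) : ℤ) = ((a + (P + 1) : ℕ) : ℤ) := by push_cast; ring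
    rw [h1, h2, leg_period (P + 1) a]
    simp

/-- partial sums of the Legendre symbol as sums over `range`. -/
lemma leg_S (n : ℕ) :
    ∑ m ∈ Finset.Icc 1 n, legendreSym p m =
      ∑ j ∈ Finset.range n, legendreSym p ((1 + j : ℕ)) := by
  rw [← Finset.Ico_add_one_right_eq_Icc, Finset.sum_Ico_eq_sum_range]
  simp

/-- `f` agrees with the Legendre symbol on numbers not divisible by `p`. -/
lemma f_eq_leg (f : ℕ → ℤ) (hf1 : f 1 = 1) (hfmul : ∀ m n, f (m * n) = f m * f n)
    (hfq : ∀ q : ℕ, q.Prime → q ≠ p → f q = legendreSym p q) :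
    ∀ m : ℕ, m ≠ 0 → ¬ p ∣ m → f m = legendreSym p m := by
  intro m
  induction m using Nat.strong_induction_on with
  | _ m ih =>
    intro hm0 hpm
    rcases eq_or_ne m 1 with rfl | hm1
    · rw [hf1, Nat.cast_one, legendreSym.at_one]
    · have h2 : 2 ≤ m := by omega
      have hq : m.minFac.Prime := Nat.minFac_prime hm1
      have hqd : m.minFac ∣ m := Nat.minFac_dvd m
      have hqne : m.minFac ≠ p := fun h => hpm (h ▸ hqd)
      obtain ⟨t, ht⟩ := hqd
      have ht0 : t ≠ 0 := by rintro rfl; rw [Nat.mul_zero] at ht; exact hm0 ht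
      have h2t : 2 * t ≤ m := by
        rw [ht]; exact Nat.mul_le_mul_right t hq.two_le
      have htlt : t < m := by omega
      have hpt : ¬ p ∣ t := fun h => hpm (ht ▸ h.mul_left _)
      rw [ht, hfmul, ih t htlt ht0 hpt, hfq _ hq hqne, ← legendreSym.mul]
      push_cast
      ring_nf

/-- nonnegativity of all partial sums from the first period. -/
lemma leg_S_nonneg
    (h : ∀ k : ℕ, 1 ≤ k → k ≤ p → 0 ≤ ∑ m ∈ Finset.Icc 1 k, legendreSym p m) :
    ∀ n : ℕ, 0 ≤ ∑ m ∈ Finset.Icc 1 n, legendreSym p m := by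
  intro n
  induction n using Nat.strong_induction_on with
  | _ n ih =>
    rcases Nat.lt_or_ge n 1 with hn | hn
    · interval_cases n; simp
    rcases le_or_gt n p with hnp | hnp
    · exact h n hn hnp
    · have hp : 0 < p := (Fact.out : p.Prime).pos
      have hsplit : n = (n - p) + p := by omega
      rw [leg_S, hsplit, Finset.sum_range_add]
      have hA : 0 ≤ ∑ i ∈ Finset.range (n - p), legendreSym p ((1 + i : ℕ)) := by
        rw [← leg_S]; exact ih (n - p) (by omega)
      have hB : 0 ≤ ∑ i ∈ Finset.range p, legendreSym p ((1 + (n - p + i) : ℕ)) := by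
        have := leg_window p (1 + (n - p))
        have heq : (fun i => legendreSym p ((1 + (n - p + i) : ℕ))) =
            fun i => legendreSym p ((1 + (n - p) + i : ℕ)) := by
          funext i; congr 1; omega
        rw [heq, this, ← leg_window p 1, ← leg_S]
        exact h p hp le_rfl
      exact add_nonneg hA hB

/-- decomposition of the sum of `f` over `[1, n]`. -/
lemma f_sum_decomp (f : ℕ → ℤ) (hf1 : f 1 = 1) (hfmul : ∀ m n, f (m * n) = f m * f n)
    (hfp : f p = 1) (hfq : ∀ q : ℕ, q.Prime → q ≠ p → f q = legendreSym p q) (n : ℕ) :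
    ∑ m ∈ Finset.Icc 1 n, f m =
      (∑ m ∈ Finset.Icc 1 n, legendreSym p m) + ∑ t ∈ Finset.Icc 1 (n / p), f t := by
  have hp : 0 < p := (Fact.out : p.Prime).pos
  have hp1 : 1 < p := (Fact.out : p.Prime).one_lt
  classical
  rw [← Finset.sum_filter_add_sum_filter_not (Finset.Icc 1 n) (fun m => p ∣ m) f]
  have h1 : ∑ m ∈ (Finset.Icc 1 n).filter (fun m => ¬ p ∣ m), f m =
      ∑ m ∈ Finset.Icc 1 n, legendreSym p m := by
    rw [Finset.sum_filter]
    apply Finset.sum_congr rfl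
    intro m hm
    simp only [Finset.mem_Icc] at hm
    by_cases hd : p ∣ m
    · simp only [hd, not_true, if_false]
      symm
      rw [legendreSym.eq_zero_iff]
      exact_mod_cast (ZMod.natCast_eq_zero_iff m p).mpr hd
    · simp only [hd, not_false_iff, if_true]
      exact f_eq_leg p f hf1 hfmul hfq m (by omega) hd
  have h2 : ∑ m ∈ (Finset.Icc 1 n).filter (fun m => p ∣ m), f m =
      ∑ t ∈ Finset.Icc 1 (n / p), f t := by
    apply Finset.sum_nbij' (fun m => m / p) (fun t => p * t)
    · intro m hm
      simp only [Finset.mem_filter, Finset.mem_Icc] at hm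
      obtain ⟨⟨hm1, hm2⟩, c, rfl⟩ := hm
      simp only [Finset.mem_Icc]
      rw [Nat.mul_div_cancel_left c hp]
      constructor
      · rcases Nat.eq_zero_or_pos c with rfl | hc
        · simp at hm1
        · exact hc
      · exact (Nat.le_div_iff_mul_le hp).mpr (by rw [mul_comm]; exact hm2)
    · intro t ht
      simp only [Finset.mem_Icc] at ht
      simp only [Finset.mem_filter, Finset.mem_Icc]
      refine ⟨⟨by nlinarith [ht.1], ?_⟩, Dvd.intro t rfl⟩
      calc p * t ≤ p * (n / p) := Nat.mul_le_mul_left p ht.2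
      _ ≤ n := Nat.mul_div_le n p
    · intro m hm
      simp only [Finset.mem_filter] at hm
      exact Nat.mul_div_cancel' hm.2
    · intro t _
      exact Nat.mul_div_cancel_left t hp
    · intro m hm
      simp only [Finset.mem_filter] at hm
      obtain ⟨c, rfl⟩ := hm.2
      rw [Nat.mul_div_cancel_left c hp, hfmul, hfp, one_mul]
  rw [h1, h2, add_comm]

end aux

/-- `L_p(n) ≥ 0` for all `n` iff the partial sums of Legendre symbols
`∑_{m=1}^{k} (m/p)` are nonnegative for all `1 ≤ k ≤ p`. -/
theorem stmt_15 (p : ℕ) [Fact p.Prime] (hodd : p ≠ 2)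
    (f : ℕ → ℤ) (hf1 : f 1 = 1) (hfmul : ∀ m n, f (m * n) = f m * f n)
    (hfp : f p = 1) (hfq : ∀ q : ℕ, q.Prime → q ≠ p → f q = legendreSym p q) :
    (∀ n : ℕ, 0 ≤ ∑ m ∈ Finset.Icc 1 n, f m) ↔
      (∀ k : ℕ, 1 ≤ k → k ≤ p → 0 ≤ ∑ m ∈ Finset.Icc 1 k, legendreSym p m) := by
  have hp1 : 1 < p := (Fact.out : p.Prime).one_lt
  constructor
  · -- forward: for k < p the sums agree; for k = p the last term is 0
    intro H k hk1 hkp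
    have hsum : ∀ g : ℕ → ℤ, ∑ m ∈ Finset.Icc 1 p, g m =
        ∑ m ∈ Finset.Icc 1 (p - 1), g m + g p := by
      intro g
      conv_lhs => rw [show p = p - 1 + 1 by omega]
      rw [Finset.sum_Icc_succ_top (by omega)]
      rw [show p - 1 + 1 = p by omega]
    have hlegp : legendreSym p (p : ℕ) = 0 := by
      rw [legendreSym.mod, Int.emod_self, legendreSym.at_zero]
    have hagree : ∀ j : ℕ, j ≤ p - 1 → ∑ m ∈ Finset.Icc 1 j, legendreSym p m =
        ∑ m ∈ Finset.Icc 1 j, f m := by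
      intro j hj
      apply Finset.sum_congr rfl
      intro m hm
      simp only [Finset.mem_Icc] at hm
      exact (f_eq_leg p f hf1 hfmul hfq m (by omega) (fun hd =>
        absurd (Nat.le_of_dvd (by omega) hd) (by omega))).symm
    by_cases hkp' : k = p
    · rw [hkp', hsum (fun m => legendreSym p (m : ℕ)), hlegp, add_zero,
        hagree (p - 1) le_rfl]
      have h1 : 0 ≤ ∑ m ∈ Finset.Icc 1 (p - 1), f m := H (p - 1)
      exact h1
    · rw [hagree k (by omega)]
      exact H k
  · -- backward: strong induction using L(n) = S(n) + L(n/p)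
    intro H n
    induction n using Nat.strong_induction_on with
    | _ n ih =>
      rcases Nat.eq_zero_or_pos n with rfl | hn
      · simp
      · rw [f_sum_decomp p f hf1 hfmul hfp hfq n]
        have hS := leg_S_nonneg p H n
        have hL := ih (n / p) (Nat.div_lt_self hn hp1)
        linarith
end

section
/- If p is an odd prime with L_p(n) ≥ 0 for all n ≥ 1, then p ≡ 3 (mod 4). -/
open Finset

private lemma sum_legendre_zero (p : ℕ) [Fact p.Prime] (hodd : p ≠ 2) :
    ∑ m ∈ Finset.Icc 1 (p - 1), legendreSym p (m : ℕ) = 0 := by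
  have hp2 : 2 ≤ p := (Fact.out : p.Prime).two_le
  have h0 : ∑ a : ZMod p, quadraticChar (ZMod p) a = 0 := by
    apply quadraticChar_sum_zero
    rw [ZMod.ringChar_zmod_n]; exact hodd
  have h1 : ∑ a : ZMod p, quadraticChar (ZMod p) a
      = ∑ m ∈ Finset.range p, legendreSym p (m : ℕ) := by
    haveI : NeZero p := ⟨by omega⟩
    refine Finset.sum_nbij' (fun a => a.val) (fun m => (m : ZMod p)) ?_ ?_ ?_ ?_ ?_
    · intro a _; exact Finset.mem_range.mpr (ZMod.val_lt a)
    · intro m _; exact Finset.mem_univ _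
    · intro a _; exact ZMod.natCast_rightInverse a
    · intro m hm; exact ZMod.val_cast_of_lt (Finset.mem_range.mp hm)
    · intro a _
      rw [legendreSym, Int.cast_natCast, ZMod.natCast_rightInverse a]
  have h2 : ∑ m ∈ Finset.range p, legendreSym p (m : ℕ)
      = legendreSym p ((0 : ℕ) : ℤ) + ∑ m ∈ Finset.Icc 1 (p - 1), legendreSym p (m : ℕ) := by
    rw [show Finset.Icc 1 (p - 1) = Finset.Ico 1 p from by
      rw [← Finset.Ico_add_one_right_eq_Icc]; congr 1; omega]
    rw [Finset.range_eq_Ico, Finset.sum_eq_sum_Ico_succ_bot (by omega : 0 < p)]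
  have h3 : legendreSym p ((0 : ℕ) : ℤ) = 0 := by simp
  rw [h1, h2, h3, zero_add] at h0
  exact h0

/-- If `L_p(n) ≥ 0` for all `n ≥ 1`, then `p ≡ 3 (mod 4)`. -/
theorem stmt_16 (p : ℕ) [Fact p.Prime] (hodd : p ≠ 2)
    (f : ℕ → ℤ) (hf1 : f 1 = 1) (hfmul : ∀ m n, f (m * n) = f m * f n)
    (hfp : f p = 1) (hfq : ∀ q : ℕ, q.Prime → q ≠ p → f q = legendreSym p q)
    (hpos : ∀ n : ℕ, 1 ≤ n → 0 ≤ ∑ m ∈ Finset.Icc 1 n, f m) :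
    p % 4 = 3 := by
  have hpp : p.Prime := Fact.out
  have hp2 : 2 ≤ p := hpp.two_le
  -- f agrees with the Legendre symbol away from p
  have feq : ∀ m : ℕ, ¬ (p ∣ m) → f m = legendreSym p (m : ℕ) := by
    intro m
    induction m using Nat.recOnMul with
    | zero => intro h; exact absurd (dvd_zero p) h
    | one => intro _; simp [hf1, legendreSym.at_one]
    | prime q hq =>
      intro hd
      have hqp : q ≠ p := by rintro rfl; exact hd dvd_rfl
      exact hfq q hq hqp
    | mul a b ha hb =>
      intro hd
      rw [hfmul, ha (fun h => hd (h.mul_right b)), hb (fun h => hd (h.mul_left a)),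
        Nat.cast_mul, legendreSym.mul]
  by_contra h34
  -- p ≡ 1 (mod 4)
  have hp1 : p % 4 = 1 := by
    have hodd' : p % 2 = 1 := Nat.odd_iff.mp (hpp.odd_of_ne_two hodd)
    omega
  have hp5 : 5 ≤ p := by omega
  set h : ℕ := (p - 1) / 2 with hh
  have hph : p = 2 * h + 1 := by omega
  have hneg1 : legendreSym p (-1) = 1 := by
    rw [legendreSym.at_neg_one hodd, ZMod.χ₄_nat_one_mod_four hp1]
  -- the half sum is zero
  have halfsum : ∑ m ∈ Finset.Icc 1 h, legendreSym p (m : ℕ) = 0 := by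
    have htot := sum_legendre_zero p hodd
    have hsplit : Finset.Icc 1 (p - 1) = Finset.Icc 1 h ∪ Finset.Icc (h + 1) (p - 1) := by
      ext x; simp only [Finset.mem_union, Finset.mem_Icc]; omega
    have hdisj : Disjoint (Finset.Icc 1 h) (Finset.Icc (h + 1) (p - 1)) := by
      simp only [Finset.disjoint_left, Finset.mem_Icc]; omega
    rw [hsplit, Finset.sum_union hdisj] at htot
    have hsecond : ∑ m ∈ Finset.Icc (h + 1) (p - 1), legendreSym p (m : ℕ)
        = ∑ m ∈ Finset.Icc 1 h, legendreSym p (m : ℕ) := by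
      refine Finset.sum_nbij' (fun m => p - m) (fun m => p - m) ?_ ?_ ?_ ?_ ?_
      · intro m hm; simp only [Finset.mem_Icc] at hm ⊢; omega
      · intro m hm; simp only [Finset.mem_Icc] at hm ⊢; omega
      · intro m hm; simp only [Finset.mem_Icc] at hm; omega
      · intro m hm; simp only [Finset.mem_Icc] at hm; omega
      · intro m hm
        simp only [Finset.mem_Icc] at hm
        have hcast : ((p - m : ℕ) : ℤ) = (p : ℤ) - m := by
          have : m ≤ p := by omega
          push_cast [this]; ring
        refine Eq.symm ?_
        calc legendreSym p ((p - m : ℕ) : ℤ)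
            = legendreSym p ((p : ℤ) - m) := by rw [hcast]
          _ = legendreSym p (-m) := by
              rw [legendreSym.mod p ((p:ℤ) - m), legendreSym.mod p (-(m:ℤ))]
              rw [show ((p:ℤ) - m) = -(m:ℤ) + (p:ℤ) * 1 by ring,
                Int.add_mul_emod_self_left]
          _ = legendreSym p (-1) * legendreSym p (m : ℕ) := by
              rw [show (-(m:ℤ)) = -1 * m by ring, legendreSym.mul]
          _ = legendreSym p (m : ℕ) := by rw [hneg1, one_mul]
    rw [hsecond] at htot
    omega
  -- key multiplicative relations
  have key1 : legendreSym p 2 * legendreSym p (h : ℕ) = 1 := by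
    rw [← legendreSym.mul]
    have : (2 * (h : ℤ)) = (p : ℤ) - 1 := by push_cast [hph]; ring
    rw [this, legendreSym.mod, show ((p:ℤ) - 1) = -1 + (p:ℤ) * 1 by ring,
      Int.add_mul_emod_self_left, ← legendreSym.mod]
    exact hneg1
  have key2 : legendreSym p 2 * legendreSym p ((h + 1 : ℕ) : ℤ) = 1 := by
    rw [← legendreSym.mul]
    have : (2 * ((h + 1 : ℕ) : ℤ)) = (p : ℤ) + 1 := by push_cast [hph]; ring
    rw [this, legendreSym.mod, show ((p:ℤ) + 1) = 1 + (p:ℤ) * 1 by ring,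
      Int.add_mul_emod_self_left, ← legendreSym.mod, legendreSym.at_one]
  have h2ne : ((2 : ℤ) : ZMod p) ≠ 0 := by
    have : ((2 : ℤ) : ZMod p) = ((2 : ℕ) : ZMod p) := by push_cast; ring
    rw [this, Ne, ZMod.natCast_eq_zero_iff]
    intro hdvd
    have := Nat.le_of_dvd (by omega) hdvd
    omega
  have hndvdh : ¬ p ∣ h := fun hd => by have := Nat.le_of_dvd (by omega) hd; omega
  have hndvdh1 : ¬ p ∣ (h + 1) := fun hd => by have := Nat.le_of_dvd (by omega) hd; omega
  -- convert f-sums to legendre sums on Icc 1 n for n ≤ p - 1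
  have fsum : ∀ n : ℕ, n ≤ p - 1 →
      ∑ m ∈ Finset.Icc 1 n, f m = ∑ m ∈ Finset.Icc 1 n, legendreSym p (m : ℕ) := by
    intro n hn
    apply Finset.sum_congr rfl
    intro m hm
    simp only [Finset.mem_Icc] at hm
    exact feq m (fun hd => by have := Nat.le_of_dvd (by omega) hd; omega)
  rcases legendreSym.eq_one_or_neg_one p h2ne with h2one | h2neg
  · -- legendreSym p 2 = 1, so legendreSym p h = 1; sum up to h - 1 is -1
    have hlh : legendreSym p (h : ℕ) = 1 := by rw [h2one, one_mul] at key1; exact key1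
    have hsum : ∑ m ∈ Finset.Icc 1 (h - 1), legendreSym p (m : ℕ) = -1 := by
      have e := Finset.sum_Icc_succ_top (a := 1) (b := h - 1) (by omega)
        (fun m => legendreSym p (m : ℕ))
      rw [show (h - 1) + 1 = h by omega] at e
      rw [halfsum] at e
      rw [hlh] at e
      omega
    have := hpos (h - 1) (by omega)
    rw [fsum (h - 1) (by omega), hsum] at this
    omega
  · -- legendreSym p 2 = -1, so legendreSym p (h+1) = -1; sum up to h + 1 is -1
    have hlh : legendreSym p ((h + 1 : ℕ) : ℤ) = -1 := by
      rw [h2neg] at key2; omega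
    have hsum : ∑ m ∈ Finset.Icc 1 (h + 1), legendreSym p (m : ℕ) = -1 := by
      rw [Finset.sum_Icc_succ_top (by omega : 1 ≤ h + 1), halfsum, hlh]
      omega
    have := hpos (h + 1) (by omega)
    rw [fsum (h + 1) (by omega), hsum] at this
    omega
end

section
/- If p ≡ 1 (mod 4) is prime, then either ∑_{a=1}^{(p-1)/2 - 1} (a/p) < 0 or ∑_{a=1}^{(p-1)/2 + 1} (a/p) < 0. -/
open Finset

lemma leg_neg (p : ℕ) [Fact p.Prime] (hp : p % 4 = 1) (a : ℤ) :
    legendreSym p (-a) = legendreSym p a := by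
  have h : legendreSym p (-a) = legendreSym p (-1) * legendreSym p a := by
    rw [← legendreSym.mul]; ring_nf
  rw [h, legendreSym.at_neg_one (show p ≠ 2 by omega), ZMod.χ₄_nat_one_mod_four hp, one_mul]

lemma leg_sub (p : ℕ) [Fact p.Prime] (hp : p % 4 = 1) (a : ℕ) :
    legendreSym p ((p : ℤ) - a) = legendreSym p a := by
  rw [legendreSym.mod p ((p:ℤ) - a)]
  have h2 : ((p:ℤ) - a) % p = (-(a:ℤ)) % p := by
    have : (p:ℤ) - a = -(a:ℤ) + (p:ℤ) * 1 := by ring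
    rw [this, Int.add_mul_emod_self_left]
  rw [h2, ← legendreSym.mod, leg_neg p hp]

lemma sum_range_leg (p : ℕ) [Fact p.Prime] (hp : p % 4 = 1) :
    ∑ a ∈ range p, legendreSym p a = 0 := by
  have h0 : (∑ x : ZMod p, quadraticChar (ZMod p) x) = 0 :=
    quadraticChar_sum_zero (by rw [ZMod.ringChar_zmod_n]; omega)
  rw [← h0]
  apply Finset.sum_nbij' (i := fun a => ((a : ℕ) : ZMod p)) (j := fun x => x.val)
  · intro a ha; exact mem_univ _
  · intro x hx; exact mem_range.mpr (ZMod.val_lt _)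
  · intro a ha; exact ZMod.val_natCast_of_lt (mem_range.mp ha)
  · intro x hx; simp [ZMod.natCast_val]
  · intro a ha
    show legendreSym p (a : ℤ) = _
    rw [legendreSym]
    push_cast
    rfl

/-- If `p ≡ 1 (mod 4)` is prime, then either
`∑_{a=1}^{(p-1)/2 - 1} (a/p) < 0` or `∑_{a=1}^{(p-1)/2 + 1} (a/p) < 0`. -/
theorem stmt_17 (p : ℕ) [Fact p.Prime] (hp : p % 4 = 1) :
    (∑ a ∈ Finset.Icc 1 ((p - 1) / 2 - 1), legendreSym p a < 0) ∨
      (∑ a ∈ Finset.Icc 1 ((p - 1) / 2 + 1), legendreSym p a < 0) := by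
  have hprime := (Fact.out : p.Prime)
  have hp2 := hprime.two_le
  have hp5 : 5 ≤ p := by omega
  set m := (p - 1) / 2 with hm
  have hm2 : 2 * m = p - 1 := by omega
  -- sum over Icc 1 (p-1) is 0
  have hIcc : ∑ a ∈ Icc 1 (p - 1), legendreSym p a = 0 := by
    have : range p = insert 0 (Icc 1 (p - 1)) := by
      ext x; simp [mem_range, mem_Icc]; omega
    have h := sum_range_leg p hp
    rw [this, Finset.sum_insert (by simp)] at h
    simpa using h
  -- split at m
  have hsplit : Icc 1 (p - 1) = Icc 1 m ∪ Icc (m + 1) (p - 1) := by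
    ext x; simp only [mem_Icc, mem_union]; omega
  have hdisj : Disjoint (Icc 1 m) (Icc (m + 1) (p - 1)) := by
    simp [Finset.disjoint_left, mem_Icc]; omega
  -- symmetry: the two halves are equal
  have hsym : ∑ a ∈ Icc 1 m, legendreSym p a
      = ∑ a ∈ Icc (m + 1) (p - 1), legendreSym p a := by
    apply Finset.sum_nbij' (i := fun a => p - a) (j := fun a => p - a)
    · intro a ha; simp only [mem_Icc] at *; omega
    · intro a ha; simp only [mem_Icc] at *; omega
    · intro a ha; simp only [mem_Icc] at ha; omega
    · intro a ha; simp only [mem_Icc] at ha; omega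
    · intro a ha
      simp only [mem_Icc] at ha
      have : ((p - a : ℕ) : ℤ) = (p : ℤ) - a := by omega
      rw [this, leg_sub p hp]
  have hhalf : ∑ a ∈ Icc 1 m, legendreSym p a = 0 := by
    rw [hsplit, Finset.sum_union hdisj, ← hsym] at hIcc
    omega
  -- values at m and m+1
  have hmne : legendreSym p (m : ℤ) ≠ 0 := by
    simp only [ne_eq, legendreSym.eq_zero_iff, Int.cast_natCast,
      ZMod.natCast_eq_zero_iff]
    intro h
    have := Nat.le_of_dvd (by omega) h
    omega
  have hmm : legendreSym p ((m : ℤ) + 1) = legendreSym p m := by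
    have : ((m : ℤ) + 1) = (p : ℤ) - m := by omega
    rw [this, leg_sub p hp]
  have hsq : legendreSym p m = 1 ∨ legendreSym p m = -1 := by
    have := legendreSym.sq_one p (a := (m : ℤ)) (by
      rw [Ne, ZMod.intCast_zmod_eq_zero_iff_dvd]
      intro h
      exact hmne (legendreSym.eq_zero_iff p _ |>.mpr (ZMod.intCast_zmod_eq_zero_iff_dvd _ _ |>.mpr h))
    )
    have h1 : legendreSym p m * legendreSym p m = 1 := by rw [← sq]; exact this
    exact Int.isUnit_iff.mp (IsUnit.of_mul_eq_one _ h1)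
  have hsum1 : ∑ a ∈ Icc 1 (m - 1), legendreSym p a = -legendreSym p m := by
    have : Icc 1 m = insert m (Icc 1 (m - 1)) := by
      ext x; simp [mem_Icc]; omega
    rw [this, Finset.sum_insert (by simp [mem_Icc]; omega)] at hhalf
    omega
  have hsum2 : ∑ a ∈ Icc 1 (m + 1), legendreSym p a = legendreSym p m := by
    have : Icc 1 (m + 1) = insert (m + 1) (Icc 1 m) := by
      ext x; simp [mem_Icc]; omega
    rw [this, Finset.sum_insert (by simp [mem_Icc]), hhalf]
    push_cast
    rw [hmm]; ring
  rcases hsq with h | h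
  · left; rw [hsum1, h]; norm_num
  · right; rw [hsum2, h]; norm_num
end

section
/- For all r, n ∈ ℕ, L_p(p^r · n) = L_p(n). -/
section aux
variable (p : ℕ) [Fact p.Prime]

private lemma chi_sum_range : p ≠ 2 → ∑ j ∈ Finset.range p, legendreSym p (j : ℤ) = 0 := by
  intro hodd
  have h : ∑ a : ZMod p, quadraticChar (ZMod p) a = 0 :=
    quadraticChar_sum_zero (by rwa [ZMod.ringChar_zmod_n])
  rw [← h]
  refine Finset.sum_nbij (fun j => (j : ZMod p)) ?_ ?_ ?_ ?_
  · intro a _; exact Finset.mem_univ _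
  · intro a ha b hb hab
    simp only [Finset.mem_coe, Finset.mem_range] at ha hb
    have := congrArg ZMod.val hab
    rwa [ZMod.val_natCast_of_lt ha, ZMod.val_natCast_of_lt hb] at this
  · intro b _
    refine ⟨b.val, by simpa [Finset.mem_range] using b.val_lt, by simp⟩
  · intro a _; simp [legendreSym]

private lemma chi_sum_mul (hodd : p ≠ 2) (n : ℕ) :
    ∑ m ∈ Finset.range (p * n), legendreSym p (m : ℤ) = 0 := by
  induction n with
  | zero => simp
  | succ n ih =>
    rw [Nat.mul_succ, Finset.sum_range_add, ih, zero_add]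
    rw [← chi_sum_range p hodd]
    refine Finset.sum_congr rfl fun j _ => ?_
    unfold legendreSym
    congr 1
    push_cast
    simp
end aux

/-- For all `r, n ∈ ℕ`, `L_p(p^r · n) = L_p(n)`. -/
theorem stmt_18 (p : ℕ) [Fact p.Prime] (hodd : p ≠ 2)
    (f : ℕ → ℤ) (hf1 : f 1 = 1) (hfmul : ∀ m n, f (m * n) = f m * f n)
    (hfp : f p = 1) (hfq : ∀ q : ℕ, q.Prime → q ≠ p → f q = legendreSym p q) :
    ∀ r n : ℕ, ∑ m ∈ Finset.Icc 1 (p ^ r * n), f m = ∑ m ∈ Finset.Icc 1 n, f m := by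
  have hp := Fact.out (p := p.Prime)
  -- f agrees with the Legendre symbol away from multiples of p
  have feq : ∀ m : ℕ, ¬ p ∣ m → f m = legendreSym p (m : ℤ) := by
    intro m
    induction m using Nat.strong_induction_on with
    | _ m ih =>
      intro hm
      rcases eq_or_ne m 1 with rfl | hm1
      · simpa [hf1] using (legendreSym.at_one p).symm
      have hm0 : m ≠ 0 := by rintro rfl; exact hm (dvd_zero p)
      set q := m.minFac with hq
      have hqp : q.Prime := Nat.minFac_prime hm1
      have hqd : q ∣ m := Nat.minFac_dvd m
      have hqne : q ≠ p := by rintro rfl; exact hm hqd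
      obtain ⟨k, hk⟩ := hqd
      have hk0 : k ≠ 0 := by rintro rfl; simp at hk; exact hm0 hk
      have hklt : k < m := by
        have h2 := hqp.two_le
        have hk1 := Nat.pos_of_ne_zero hk0
        rw [hk]; nlinarith
      have hkp : ¬ p ∣ k := fun h => hm (hk ▸ h.mul_left q)
      have : f m = f q * f k := by rw [hk]; exact hfmul q k
      rw [this, hfq q hqp hqne, ih k hklt hkp, ← legendreSym.mul, hk]
      push_cast; ring_nf
  -- the r = 1 case
  have key : ∀ n : ℕ, ∑ m ∈ Finset.Icc 1 (p * n), f m = ∑ m ∈ Finset.Icc 1 n, f m := by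
    intro n
    rw [← Finset.sum_filter_add_sum_filter_not (Finset.Icc 1 (p * n)) (fun m => p ∣ m)]
    have h1 : ∑ m ∈ (Finset.Icc 1 (p * n)).filter (fun m => p ∣ m), f m
        = ∑ k ∈ Finset.Icc 1 n, f k := by
      refine Finset.sum_nbij' (fun m => m / p) (fun k => p * k) ?_ ?_ ?_ ?_ ?_
      · intro m hm
        simp only [Finset.mem_filter, Finset.mem_Icc] at hm
        obtain ⟨⟨h1, h2⟩, hd⟩ := hm
        simp only [Finset.mem_Icc]
        exact ⟨Nat.one_le_div_iff hp.pos |>.mpr (Nat.le_of_dvd (by omega) hd),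
          Nat.div_le_div_right h2 |>.trans_eq (Nat.mul_div_cancel_left n hp.pos)⟩
      · intro k hk
        simp only [Finset.mem_Icc] at hk
        simp only [Finset.mem_filter, Finset.mem_Icc]
        exact ⟨⟨by nlinarith [hp.pos], Nat.mul_le_mul_left p hk.2⟩, Dvd.intro k rfl⟩
      · intro m hm
        simp only [Finset.mem_filter] at hm
        exact Nat.mul_div_cancel' hm.2
      · intro k hk
        exact Nat.mul_div_cancel_left k hp.pos
      · intro m hm
        simp only [Finset.mem_filter] at hm
        obtain ⟨k, hk⟩ := hm.2
        simp only [hk, Nat.mul_div_cancel_left k hp.pos, hfmul, hfp, one_mul]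
    have h2 : ∑ m ∈ (Finset.Icc 1 (p * n)).filter (fun m => ¬ p ∣ m), f m = 0 := by
      have e1 : ∑ m ∈ (Finset.Icc 1 (p * n)).filter (fun m => ¬ p ∣ m), f m
          = ∑ m ∈ (Finset.Icc 1 (p * n)).filter (fun m => ¬ p ∣ m), legendreSym p (m : ℤ) := by
        refine Finset.sum_congr rfl fun m hm => ?_
        simp only [Finset.mem_filter] at hm
        exact feq m hm.2
      have e2 : ∑ m ∈ (Finset.Icc 1 (p * n)).filter (fun m => ¬ p ∣ m),
            legendreSym p (m : ℤ)
          = ∑ m ∈ Finset.Icc 1 (p * n), legendreSym p (m : ℤ) := by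
        refine Finset.sum_filter_of_ne fun m _ hne hd => ?_
        exact hne ((legendreSym.eq_zero_iff p _).mpr
          (by exact_mod_cast (ZMod.natCast_eq_zero_iff m p).mpr hd))
      have hz : ∀ m : ℕ, p ∣ m → legendreSym p (m : ℤ) = 0 := fun m hd =>
        (legendreSym.eq_zero_iff p _).mpr
          (by exact_mod_cast (ZMod.natCast_eq_zero_iff m p).mpr hd)
      have h3 : ∑ m ∈ Finset.range (p * n + 1), legendreSym p (m : ℤ)
          = ∑ m ∈ Finset.Icc 1 (p * n), legendreSym p (m : ℤ) := by
        rw [Finset.sum_range_succ', hz 0 (dvd_zero p), add_zero,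
          show Finset.Icc 1 (p * n) = Finset.Ico 1 (p * n + 1) from
            (Finset.Ico_add_one_right_eq_Icc 1 (p * n)).symm,
          Finset.sum_Ico_eq_sum_range]
        simp [add_comm]
      have h4 : ∑ m ∈ Finset.range (p * n + 1), legendreSym p (m : ℤ) = 0 := by
        rw [Finset.sum_range_succ, chi_sum_mul p hodd, hz (p * n) ⟨n, rfl⟩, add_zero]
      rw [e1, e2, ← h3, h4]
    rw [h1, h2, add_zero]
  intro r
  induction r with
  | zero => intro n; simp
  | succ r ih =>
    intro n
    rw [pow_succ, mul_comm (p ^ r) p, mul_assoc, key, ih]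
end
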